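/- arXiv:1407.7226 — 7 statements merged into one kernel-verified Lean document; each statement's English description precedes it below -/
import Mathlib

section
/- The class of invariably generated groups is closed under extensions: if N is a normal subgroup of G such that both N and G/N are invariably generated, then G is invariably generated. -/
/-- A group is invariably generated if the only subgroup meeting every
conjugacy class is the whole group. -/
def IsInvariablyGenerated (G : Type*) [Group G] : Prop :=
  ∀ H : Subgroup G, (∀ g : G, ∃ h ∈ H, IsConj g h) → H = ⊤

/-- Invariable generation is closed under extensions: if `N ⊴ G` is invariably
generated (as an abstract group) and `G/N` is invariably generated, then so is `G`. -/
theorem invariablyGenerated_of_extension {G : Type*} [Group G]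
    (N : Subgroup G) [N.Normal]
    (hN : IsInvariablyGenerated N) (hQ : IsInvariablyGenerated (G ⧸ N)) :
    IsInvariablyGenerated G := by
  intro H hH
  -- Step 1: the image of H in G/N meets every conjugacy class, so H ⊔ N = ⊤.
  have hmap : H.map (QuotientGroup.mk' N) = ⊤ := by
    apply hQ
    intro q
    obtain ⟨g, rfl⟩ := QuotientGroup.mk'_surjective N q
    obtain ⟨h, hh, hc⟩ := hH g
    exact ⟨_, Subgroup.mem_map_of_mem _ hh, (QuotientGroup.mk' N).map_isConj hc⟩
  have hsup : H ⊔ N = ⊤ := by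
    have := congrArg (Subgroup.comap (QuotientGroup.mk' N)) hmap
    rwa [Subgroup.comap_map_eq, QuotientGroup.ker_mk', Subgroup.comap_top] at this
  -- Step 2: H ∩ N meets every conjugacy class of N.
  have hHN : H.subgroupOf N = ⊤ := by
    apply hN
    intro n
    obtain ⟨h, hh, hc⟩ := hH (n : G)
    obtain ⟨c, hc⟩ := isConj_iff.mp hc
    -- h ∈ N
    have hhN : h ∈ N := by
      rw [← hc]; exact Subgroup.Normal.conj_mem ‹N.Normal› _ n.2 c
    -- write c⁻¹ = m * h₁ with m ∈ N, h₁ ∈ H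
    have hcinv : c⁻¹ ∈ (↑(N ⊔ H) : Set G) := by
      rw [sup_comm] at hsup
      rw [hsup]; trivial
    rw [Subgroup.normal_mul] at hcinv
    obtain ⟨m, hm, h₁, hh₁, hmh⟩ := hcinv
    -- k := h₁ * h * h₁⁻¹ lies in H ∩ N
    have hkH : h₁ * h * h₁⁻¹ ∈ H := H.mul_mem (H.mul_mem hh₁ hh) (H.inv_mem hh₁)
    have hkN : h₁ * h * h₁⁻¹ ∈ N := Subgroup.Normal.conj_mem ‹N.Normal› _ hhN h₁
    refine ⟨⟨h₁ * h * h₁⁻¹, hkN⟩, hkH, ?_⟩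
    -- n = m * k * m⁻¹, so m⁻¹ * n * m = k
    refine isConj_iff.mpr ⟨⟨m, hm⟩⁻¹, ?_⟩
    ext
    push_cast
    have hn : (n : G) = c⁻¹ * h * c := by
      rw [← hc]; group
    have hcm : c = h₁⁻¹ * m⁻¹ := by
      rw [← inv_inv c, ← hmh]; group
    rw [hn, hcm]
    group
  -- Step 3: N ≤ H, hence H = ⊤.
  have hNH : N ≤ H := Subgroup.subgroupOf_eq_top.mp hHN
  rw [← hsup, sup_eq_left.mpr hNH]
end

section
/- The group of finitely supported permutations of ℕ is not invariably generated: the subgroup of finitely supported permutations supported on the even numbers is a proper subgroup meeting every conjugacy class. -/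
open Equiv

def finitelySupportedPerms : Subgroup (Equiv.Perm ℕ) where
  carrier := {σ | {n : ℕ | σ n ≠ n}.Finite}
  one_mem' := by simp
  mul_mem' := by
    intro a b ha hb
    apply Set.Finite.subset (ha.union hb)
    intro n hn
    by_cases h : b n = n
    · left; simpa [Equiv.Perm.mul_apply, h] using hn
    · right; exact h
  inv_mem' := by
    intro a ha
    apply ha.subset
    intro n hn
    simp only [Set.mem_setOf_eq] at hn ⊢
    intro h
    exact hn (a.injective (by simp [h]))

lemma swap_mem_fsp (a b : ℕ) : Equiv.swap a b ∈ finitelySupportedPerms := by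
  apply Set.Finite.subset (Set.Finite.insert a (Set.finite_singleton b))
  intro n hn
  simp only [Set.mem_setOf_eq] at hn
  by_contra hcon
  rw [Set.mem_insert_iff, Set.mem_singleton_iff] at hcon
  push_neg at hcon
  exact hn (Equiv.swap_apply_of_ne_of_ne hcon.1 hcon.2)

lemma aux_tau (T : Finset ℕ) (hT : ∀ t ∈ T, ¬ Even t) :
    ∀ A : Finset ℕ, ∃ τ : Equiv.Perm ℕ, τ ∈ finitelySupportedPerms ∧
      (∀ t ∈ T, Even (τ t)) ∧ (∀ a ∈ A, a ∉ T → τ a = a) := by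
  classical
  induction T using Finset.induction_on with
  | empty => exact fun A => ⟨1, Subgroup.one_mem _, by simp, by simp⟩
  | @insert t T' ht ih =>
    intro A
    obtain ⟨τ', hmem, heven, hfix⟩ := ih (fun s hs => hT s (Finset.mem_insert_of_mem hs))
      (insert t A)
    set F : Finset ℕ := (A ∪ T'.image τ') ∪ {t} with hF
    set e : ℕ := 2 * (F.sup id + 1) with he
    have heF : e ∉ F := by
      intro h
      have : e ≤ F.sup id := Finset.le_sup (f := id) h
      omega
    have hee : Even e := ⟨F.sup id + 1, by omega⟩
    have hτ't : τ' t = t := hfix t (Finset.mem_insert_self t A) ht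
    refine ⟨Equiv.swap t e * τ', Subgroup.mul_mem _ (swap_mem_fsp t e) hmem, ?_, ?_⟩
    · intro s hs
      rcases Finset.mem_insert.mp hs with rfl | hs'
      · simpa [Equiv.Perm.mul_apply, hτ't] using hee
      · have h1 : τ' s ≠ t := by
          intro h
          exact hT t (Finset.mem_insert_self t T') (h ▸ heven s hs')
        have h2 : τ' s ≠ e := by
          intro h
          exact heF (h ▸ Finset.mem_union_left _ (Finset.mem_union_right _
            (Finset.mem_image_of_mem τ' hs')))
        simpa [Equiv.Perm.mul_apply, Equiv.swap_apply_of_ne_of_ne h1 h2] using heven s hs'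
    · intro a ha hat
      have h1 : a ≠ t := fun h => hat (h ▸ Finset.mem_insert_self t T')
      have h2 : a ∉ T' := fun h => hat (Finset.mem_insert_of_mem h)
      have h3 : τ' a = a := hfix a (Finset.mem_insert_of_mem ha) h2
      have h4 : a ≠ e := fun h => heF (h ▸ Finset.mem_union_left _ (Finset.mem_union_left _ ha))
      simp [Equiv.Perm.mul_apply, h3, Equiv.swap_apply_of_ne_of_ne h1 h4]

/-- The group of finitely supported permutations of `ℕ` is not invariably
generated: the subgroup of permutations supported on the even numbers is a
proper subgroup meeting every conjugacy class. -/
theorem finitelySupportedPerms_not_invariably_generated :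
    ∃ H : Subgroup finitelySupportedPerms,
      (H : Set finitelySupportedPerms) =
        {σ : finitelySupportedPerms | ∀ n : ℕ, ¬ Even n → (σ : Equiv.Perm ℕ) n = n} ∧
      H ≠ ⊤ ∧ ∀ g : finitelySupportedPerms, ∃ h ∈ H, IsConj g h := by
  classical
  refine ⟨{
    carrier := {σ : finitelySupportedPerms | ∀ n : ℕ, ¬ Even n → (σ : Equiv.Perm ℕ) n = n}
    one_mem' := by intro n _; rfl
    mul_mem' := by
      intro a b ha hb n hn
      have : ((a * b : finitelySupportedPerms) : Equiv.Perm ℕ) n = (a : Equiv.Perm ℕ) ((b : Equiv.Perm ℕ) n) := rfl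
      rw [this, hb n hn, ha n hn]
    inv_mem' := by
      intro a ha n hn
      have h := ha n hn
      exact (a : Equiv.Perm ℕ).injective (by simp [h])
  }, rfl, ?_, ?_⟩
  · intro htop
    rw [Subgroup.eq_top_iff'] at htop
    have h1 : ∀ n : ℕ, ¬ Even n →
        ((⟨Equiv.swap 0 1, swap_mem_fsp 0 1⟩ : finitelySupportedPerms) : Equiv.Perm ℕ) n = n :=
      htop ⟨Equiv.swap 0 1, swap_mem_fsp 0 1⟩
    have := h1 1 (by simp)
    simp [Equiv.swap_apply_right] at this
  · intro g
    set σ : Equiv.Perm ℕ := (g : Equiv.Perm ℕ) with hσ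
    have hfin : {n : ℕ | σ n ≠ n}.Finite := g.2
    set A : Finset ℕ := hfin.toFinset with hA
    set T : Finset ℕ := A.filter (fun n => ¬ Even n) with hTdef
    obtain ⟨τ, hτmem, hτeven, hτfix⟩ := aux_tau T
      (fun t ht => (Finset.mem_filter.mp ht).2) A
    set c : finitelySupportedPerms := ⟨τ, hτmem⟩ with hc
    refine ⟨c * g * c⁻¹, ?_, isConj_iff.mpr ⟨c, rfl⟩⟩
    intro n hn
    have happ : ((c * g * c⁻¹ : finitelySupportedPerms) : Equiv.Perm ℕ) n
        = τ (σ (τ⁻¹ n)) := rfl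
    rw [happ]
    set m : ℕ := τ⁻¹ n with hm
    have hτm : τ m = n := by simp [hm]
    by_cases hσm : σ m = m
    · rw [hσm, hτm]
    · exfalso
      have hmA : m ∈ A := by simp [hA, Set.Finite.mem_toFinset]; exact hσm
      by_cases hme : Even m
      · have hmT : m ∉ T := by simp [hTdef, hme]
        have := hτfix m hmA hmT
        rw [this] at hτm
        exact hn (hτm ▸ hme)
      · have hmT : m ∈ T := Finset.mem_filter.mpr ⟨hmA, hme⟩
        exact hn (hτm ▸ hτeven m hmT)
end

section
/- Every group with exactly one non-trivial conjugacy class and order greater than 2 is not invariably generated. -/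
/-- A group with exactly one non-trivial conjugacy class and more than two
elements is not invariably generated: some proper subgroup meets every
conjugacy class. -/
theorem single_conjugacy_class_not_invariably_generated
    (G : Type*) [Group G]
    (hconj : ∀ g h : G, g ≠ 1 → h ≠ 1 → IsConj g h)
    (hcard : ∃ x y : G, x ≠ 1 ∧ y ≠ 1 ∧ x ≠ y) :
    ∃ H : Subgroup G, H ≠ ⊤ ∧ ∀ g : G, ∃ h ∈ H, IsConj g h := by
  obtain ⟨x, y, hx, hy, hxy⟩ := hcard
  refine ⟨Subgroup.zpowers x, ?_, ?_⟩
  · intro htop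
    have hcomm : ∀ a b : G, a * b = b * a := by
      intro a b
      have ha : a ∈ Subgroup.zpowers x := htop ▸ Subgroup.mem_top a
      have hb : b ∈ Subgroup.zpowers x := htop ▸ Subgroup.mem_top b
      obtain ⟨m, rfl⟩ := ha
      obtain ⟨n, rfl⟩ := hb
      rw [← zpow_add, ← zpow_add, add_comm]
    have := hconj x y hx hy
    obtain ⟨c, hc⟩ := this
    apply hxy
    have h2 : (c : G) * x = y * c := hc
    rw [hcomm (c : G) x] at h2
    exact mul_right_cancel h2
  · intro g
    by_cases hg : g = 1
    · exact ⟨1, Subgroup.one_mem _, by subst hg; exact IsConj.refl 1⟩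
    · exact ⟨x, Subgroup.mem_zpowers x, hconj g x hg hx⟩
end

section
/- Main Proposition (wandering complement): let Γ act minimally as a non-elementary convergence group on a compact metrizable space X. Then for every element γ ∈ Γ of infinite order there exist sets Ω⁺, Ω⁻ ⊆ X such that γⁿ·(X \ Ω⁻) ⊆ Ω⁺ for all n ≥ 1, and X \ (Ω⁻ ∪ Ω⁺) has non-empty interior. In particular X \ (Ω⁻ ∪ Ω⁺) is γ-wandering: its translates γⁿ·(X \ (Ω⁻ ∪ Ω⁺)), n ∈ ℤ, are pairwise disjoint. -/
open Pointwise

/-- The space of ordered triples of pairwise distinct points of `X`. -/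
def distinctTriples (X : Type*) : Set (X × X × X) :=
  {p | p.1 ≠ p.2.1 ∧ p.1 ≠ p.2.2 ∧ p.2.1 ≠ p.2.2}

/-- A convergence action: an action by homeomorphisms such that the induced
action on the space of ordered triples of pairwise distinct points is
properly discontinuous. -/
def IsConvergenceAction (Γ X : Type*) [Group Γ] [TopologicalSpace X]
    [MulAction Γ X] : Prop :=
  (∀ g : Γ, Continuous fun x : X => g • x) ∧
  ∀ K L : Set (X × X × X), K ⊆ distinctTriples X → L ⊆ distinctTriples X →
    IsCompact K → IsCompact L →
    {g : Γ | ((fun p : X × X × X => (g • p.1, g • p.2.1, g • p.2.2)) '' K ∩ L).Nonempty}.Finite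

/-- A minimal action: every orbit is dense. -/
def IsMinimalAction (Γ X : Type*) [Group Γ] [TopologicalSpace X]
    [MulAction Γ X] : Prop :=
  ∀ x : X, Dense (MulAction.orbit Γ x)

/-- A non-elementary action: the acting group is infinite and there is no
non-empty invariant subset with at most two points. -/
def IsNonElementaryAction (Γ X : Type*) [Group Γ] [MulAction Γ X] : Prop :=
  Infinite Γ ∧
  ¬ ∃ S : Set X, S.Nonempty ∧ (∃ a b : X, S ⊆ {a, b}) ∧ ∀ g : Γ, g • S = S

/-- Main Proposition: for a minimal non-elementary convergence action and an
element `γ` of infinite order with attracting point `p` and repelling point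
`r`, there are sets `Ω⁺, Ω⁻` with `γⁿ (X \\ Ω⁻) ⊆ Ω⁺` for all `n ≥ 1` such
that the complement `X \\ (Ω⁻ ∪ Ω⁺)` has non-empty interior; in particular it
is `γ`-wandering: its `γ`-translates are pairwise disjoint. -/
theorem convergence_wandering_complement (Γ X : Type*) [Group Γ]
    [TopologicalSpace X] [CompactSpace X] [TopologicalSpace.MetrizableSpace X]
    [MulAction Γ X]
    (hconv : IsConvergenceAction Γ X)
    (hmin : IsMinimalAction Γ X)
    (hne : IsNonElementaryAction Γ X)
    (hcard : ∃ a b c : X, a ≠ b ∧ a ≠ c ∧ b ≠ c)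
    (γ : Γ) (hγ : ¬ IsOfFinOrder γ)
    (p r : X) (hp : γ • p = p) (hr : γ • r = r)
    (hconvp : ∀ x : X, x ≠ r → ∀ U ∈ nhds p, ∃ n₀ : ℕ, ∀ n ≥ n₀, γ ^ n • x ∈ U)
    (hdyn : ∀ R ∈ nhds r, ∀ A ∈ nhds p,
      ∃ n₀ : ℕ, ∀ n ≥ n₀, ∀ x : X, x ∉ R → γ ^ n • x ∈ A) :
    ∃ Ωplus Ωminus : Set X,
      (∀ n : ℕ, 1 ≤ n → γ ^ n • (Set.univ \ Ωminus) ⊆ Ωplus) ∧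
      (interior (Set.univ \ (Ωminus ∪ Ωplus))).Nonempty ∧
      (∀ m n : ℤ, m ≠ n →
        Disjoint (γ ^ m • (Set.univ \ (Ωminus ∪ Ωplus)))
          (γ ^ n • (Set.univ \ (Ωminus ∪ Ωplus)))) := by
  classical
  haveI hT2 : T2Space X := by
    letI := TopologicalSpace.metrizableSpaceMetric X
    infer_instance
  -- find a point distinct from both p and r
  obtain ⟨x₀, hx₀p, hx₀r⟩ : ∃ x : X, x ≠ p ∧ x ≠ r := by
    obtain ⟨a, b, c, hab, hac, hbc⟩ := hcard
    by_contra h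
    push_neg at h
    have ha := h a; have hb := h b; have hc := h c
    by_cases hap : a = p <;> by_cases hbp : b = p <;> by_cases hcp : c = p <;>
      simp_all
  -- x₀ is not periodic under γ
  have hper : ∀ k : ℕ, 1 ≤ k → γ ^ k • x₀ ≠ x₀ := by
    intro k hk hfix
    apply hx₀p
    have hiter : ∀ m : ℕ, γ ^ (k * m) • x₀ = x₀ := by
      intro m
      induction m with
      | zero => simp
      | succ m ih => rw [Nat.mul_succ, pow_add, mul_smul, hfix, ih]
    obtain ⟨U, V, hUo, hVo, hxU, hpV, hUV⟩ := t2_separation hx₀p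
    exfalso
    obtain ⟨n₀, hn₀⟩ := hconvp x₀ hx₀r V (hVo.mem_nhds hpV)
    have hx₀V : x₀ ∈ V := by
      have := hn₀ (k * n₀) (Nat.le_mul_of_pos_left n₀ hk)
      rwa [hiter n₀] at this
    exact Set.disjoint_left.mp hUV hxU hx₀V
  -- separating neighbourhoods
  obtain ⟨U1, A, hU1o, hAo, hxU1, hpA, hU1A⟩ := t2_separation hx₀p
  obtain ⟨U2, R, hU2o, hRo, hxU2, hrR, hU2R⟩ := t2_separation hx₀r
  obtain ⟨n₀, hn₀⟩ := hdyn R (hRo.mem_nhds hrR) A (hAo.mem_nhds hpA)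
  -- for each n ≥ 1 a neighbourhood of x₀ moved off itself by γ^n
  have key : ∀ n : ℕ, ∃ V : Set X, IsOpen V ∧ x₀ ∈ V ∧
      (1 ≤ n → Disjoint (γ ^ n • V) V) := by
    intro n
    rcases Nat.eq_zero_or_pos n with h0 | h1
    · exact ⟨Set.univ, isOpen_univ, trivial, by omega⟩
    · obtain ⟨U, V', hUo, hV'o, hgU, hxV', hUV'⟩ := t2_separation (hper n h1)
      refine ⟨V' ∩ (fun x => γ ^ n • x) ⁻¹' U,
        hV'o.inter (hUo.preimage (hconv.1 (γ ^ n))), ⟨hxV', hgU⟩, fun _ => ?_⟩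
      rw [Set.disjoint_left]
      rintro y hy hy2
      rw [Set.mem_smul_set] at hy
      obtain ⟨z, hz, rfl⟩ := hy
      exact Set.disjoint_left.mp hUV' hz.2 hy2.1
  choose V hVo hVx hVd using key
  -- the wandering open set O
  set O : Set X := (U1 ∩ U2) ∩ ⋂ n ∈ Finset.range n₀, V n with hOdef
  have hOopen : IsOpen O :=
    (hU1o.inter hU2o).inter (isOpen_biInter_finset fun n _ => hVo n)
  have hxO : x₀ ∈ O := by
    refine ⟨⟨hxU1, hxU2⟩, ?_⟩
    exact Set.mem_iInter₂.mpr fun n _ => hVx n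
  have hOV : ∀ n < n₀, O ⊆ V n := by
    intro n hn x hx
    exact Set.mem_iInter₂.mp hx.2 n (Finset.mem_range.mpr hn)
  have hOdisj : ∀ n : ℕ, 1 ≤ n → Disjoint (γ ^ n • O) O := by
    intro n hn
    rcases lt_or_ge n n₀ with hlt | hge
    · exact Disjoint.mono (Set.smul_set_mono (hOV n hlt)) (hOV n hlt) (hVd n hn)
    · rw [Set.disjoint_left]
      intro y hy hyO
      rw [Set.mem_smul_set] at hy
      obtain ⟨z, hz, rfl⟩ := hy
      have hzR : z ∉ R := fun h => Set.disjoint_left.mp hU2R hz.1.2 h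
      have hA : γ ^ n • z ∈ A := hn₀ n hge z hzR
      exact Set.disjoint_left.mp hU1A hyO.1.1 hA
  -- the sets Ωplus and Ωminus
  set Ωp : Set X := {y | ∃ n : ℕ, 1 ≤ n ∧ y ∈ γ ^ n • O} with hΩp
  set Ωm : Set X := {x | ¬ ∀ n : ℕ, 1 ≤ n → γ ^ n • x ∈ Ωp} with hΩm
  have hOnp : ∀ x ∈ O, x ∉ Ωp := by
    rintro x hx ⟨n, hn, hmem⟩
    exact Set.disjoint_left.mp (hOdisj n hn) hmem hx
  have hOW : O ⊆ Set.univ \ (Ωm ∪ Ωp) := by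
    intro x hx
    refine ⟨trivial, ?_⟩
    rintro (hm | hp')
    · exact hm fun n hn => ⟨n, hn, Set.smul_mem_smul_set hx⟩
    · exact hOnp x hx hp'
  have hW1 : ∀ k : ℕ, 1 ≤ k → ∀ x, x ∈ Set.univ \ (Ωm ∪ Ωp) →
      γ ^ k • x ∉ Set.univ \ (Ωm ∪ Ωp) := by
    intro k hk x hx hgx
    have hxm : x ∉ Ωm := fun h => hx.2 (Or.inl h)
    have hall : ∀ n : ℕ, 1 ≤ n → γ ^ n • x ∈ Ωp := not_not.mp hxm
    exact hgx.2 (Or.inr (hall k hk))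
  refine ⟨Ωp, Ωm, ?_, ?_, ?_⟩
  · intro n hn y hy
    rw [Set.mem_smul_set] at hy
    obtain ⟨x, hx, rfl⟩ := hy
    have hxm : x ∉ Ωm := hx.2
    exact (not_not.mp hxm) n hn
  · exact ⟨x₀, interior_maximal hOW hOopen hxO⟩
  · have haux : ∀ m n : ℤ, m < n → ∀ a,
        a ∈ γ ^ m • (Set.univ \ (Ωm ∪ Ωp)) →
        a ∈ γ ^ n • (Set.univ \ (Ωm ∪ Ωp)) → False := by
      intro m n hlt a ham han
      rw [Set.mem_smul_set] at ham han
      obtain ⟨w, hw, rfl⟩ := ham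
      obtain ⟨w', hw', heq⟩ := han
      have hww' : w = γ ^ (n - m) • w' := by
        calc w = (γ ^ m)⁻¹ • (γ ^ m • w) := by rw [inv_smul_smul]
          _ = (γ ^ m)⁻¹ • (γ ^ n • w') := by rw [heq]
          _ = ((γ ^ m)⁻¹ * γ ^ n) • w' := by rw [mul_smul]
          _ = γ ^ (n - m) • w' := by rw [← zpow_neg, ← zpow_add, neg_add_eq_sub]
      have hk1 : 1 ≤ (n - m).toNat := by omega
      have hzk : γ ^ (n - m) = γ ^ ((n - m).toNat : ℕ) := by
        rw [← zpow_natCast, Int.toNat_of_nonneg (by omega)]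
      apply hW1 (n - m).toNat hk1 w' hw'
      rw [← hzk, ← hww']
      exact hw
    intro m n hmn
    rw [Set.disjoint_left]
    intro a ham han
    rcases lt_or_gt_of_ne hmn with h | h
    · exact haux m n h a ham han
    · exact haux n m h a han ham
end

section
/- Placement lemma: let Γ act minimally as a non-elementary convergence group on a compact metrizable space X. Given a proper closed subset Σ ⊊ X and a non-empty open subset O ⊆ X, there exists δ ∈ Γ with δ·Σ ⊆ O. -/
open Pointwise

lemma exists_ulim {X : Type*} [TopologicalSpace X] [CompactSpace X]
    (F : Ultrafilter ℕ) (u : ℕ → X) :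
    ∃ x : X, ∀ V ∈ nhds x, {n | u n ∈ V} ∈ (F : Filter ℕ) := by
  obtain ⟨x, -, hx⟩ := isCompact_univ.ultrafilter_le_nhds (F.map u)
    (by simp [Filter.le_principal_iff])
  refine ⟨x, fun V hV => ?_⟩
  have := hx hV
  rwa [Ultrafilter.coe_map, Filter.mem_map] at this


lemma avoid_two {X : Type*} {c1 c2 c3 : X} (h12 : c1 ≠ c2) (h13 : c1 ≠ c3) (h23 : c2 ≠ c3)
    (p q : X) : ∃ t, t ≠ p ∧ t ≠ q := by
  by_cases h1 : c1 ≠ p ∧ c1 ≠ q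
  · exact ⟨c1, h1⟩
  by_cases h2 : c2 ≠ p ∧ c2 ≠ q
  · exact ⟨c2, h2⟩
  rw [not_and_or, not_ne_iff] at h1 h2
  rw [not_ne_iff] at h1 h2
  refine ⟨c3, ?_, ?_⟩ <;>
    (rcases h1 with rfl | rfl <;> rcases h2 with rfl | rfl <;> intro h <;> simp_all)

lemma comb {X : Type*} (G : Set (X × X))
    (h3 : ∀ p q r : X × X, p ∈ G → q ∈ G → r ∈ G →
      p.1 ≠ q.1 → p.1 ≠ r.1 → q.1 ≠ r.1 → p.2 ≠ q.2 → p.2 ≠ r.2 → q.2 ≠ r.2 → False)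
    (hp1 : ∀ x : X, ∃ y, (x, y) ∈ G)
    (hp2 : ∀ y : X, ∃ x, (x, y) ∈ G)
    {c1 c2 c3 : X} (h12 : c1 ≠ c2) (h13 : c1 ≠ c3) (h23 : c2 ≠ c3) :
    ∃ a b, ∀ p ∈ G, p.1 = a ∨ p.2 = b := by
  -- Step 1: find a branch point a with two distinct images y1 ≠ y2
  obtain ⟨s1, hs1⟩ := hp2 c1
  obtain ⟨s2, hs2⟩ := hp2 c2
  obtain ⟨s3, hs3⟩ := hp2 c3
  obtain ⟨a, y1, y2, hy12, hay1, hay2⟩ :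
      ∃ a y1 y2, y1 ≠ y2 ∧ (a, y1) ∈ G ∧ (a, y2) ∈ G := by
    by_cases e12 : s1 = s2
    · exact ⟨s1, c1, c2, h12, hs1, by rw [e12]; exact hs2⟩
    by_cases e13 : s1 = s3
    · exact ⟨s1, c1, c3, h13, hs1, by rw [e13]; exact hs3⟩
    by_cases e23 : s2 = s3
    · exact ⟨s2, c2, c3, h23, hs2, by rw [e23]; exact hs3⟩
    · exact absurd (h3 (s1,c1) (s2,c2) (s3,c3) hs1 hs2 hs3 e12 e13 e23 h12 h13 h23) id
  -- Step 2: core rigidity away from a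
  have core : ∀ u v u' v', (u,v) ∈ G → (u',v') ∈ G → u ≠ a → u' ≠ a → v = v' := by
    intro u v u' v' huv huv' hu hu'
    by_contra hvv
    by_cases huu : u = u'
    · -- same first coordinate: u is a second branch point
      subst huu
      obtain ⟨w, hwa, hwu⟩ := avoid_two h12 h13 h23 a u
      obtain ⟨z, hwz⟩ := hp1 w
      have use3 : ∀ y c, (a,y) ∈ G → (u,c) ∈ G → y ≠ z → c ≠ z → c ≠ y → False := by
        intro y c hy hc hyz hcz hcy
        exact h3 (a,y) (u,c) (w,z) hy hc hwz (Ne.symm hu) (Ne.symm hwa) (Ne.symm hwu)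
          (Ne.symm hcy) hyz hcz
      -- find either a good triple directly, or the degenerate configuration
      have C1 : (∃ y c, (a,y) ∈ G ∧ (u,c) ∈ G ∧ y ≠ z ∧ c ≠ z ∧ c ≠ y) ∨
          ((a,z) ∈ G ∧ ∃ y, (a,y) ∈ G ∧ (u,y) ∈ G ∧ (u,z) ∈ G ∧ y ≠ z) := by
        by_cases hz1 : z = y1
        · by_cases hc : ∃ c, (c = v ∨ c = v') ∧ c ≠ z ∧ c ≠ y2
          · obtain ⟨c, hc0, hc1, hc2⟩ := hc
            refine Or.inl ⟨y2, c, hay2, ?_, fun h => hy12 (by rw [hz1] at h; rw [h]), hc1, hc2⟩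
            rcases hc0 with rfl | rfl
            exacts [huv, huv']
          · push_neg at hc
            have hv := hc v (Or.inl rfl)
            have hv' := hc v' (Or.inr rfl)
            refine Or.inr ⟨by rw [hz1]; exact hay1, y2, hay2, ?_, ?_,
              fun h => hy12 (by rw [hz1] at h; rw [h])⟩
            · -- (u, y2) ∈ G : one of v, v' equals y2
              rcases Classical.em (v = z) with rfl | h
              · have e := hv' (fun h => hvv h.symm)
                rw [e] at huv'; exact huv'
              · have e := hv h
                rw [e] at huv; exact huv
            · -- (u, z) ∈ G
              rcases Classical.em (v = z) with rfl | h
              · exact huv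
              · have e := hv h
                have h2 : v' = z := by
                  by_contra h2
                  have e2 := hv' h2
                  rw [e2] at hvv; rw [e] at hvv; exact hvv rfl
                rw [h2] at huv'; exact huv'
        · by_cases hz2 : z = y2
          · by_cases hc : ∃ c, (c = v ∨ c = v') ∧ c ≠ z ∧ c ≠ y1
            · obtain ⟨c, hc0, hc1, hc2⟩ := hc
              refine Or.inl ⟨y1, c, hay1, ?_, fun h => hz1 h.symm, hc1, hc2⟩
              rcases hc0 with rfl | rfl
              exacts [huv, huv']
            · push_neg at hc
              have hv := hc v (Or.inl rfl)
              have hv' := hc v' (Or.inr rfl)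
              refine Or.inr ⟨by rw [hz2]; exact hay2, y1, hay1, ?_, ?_, fun h => hz1 h.symm⟩
              · rcases Classical.em (v = z) with rfl | h
                · have e := hv' (fun h => hvv h.symm)
                  rw [e] at huv'; exact huv'
                · have e := hv h
                  rw [e] at huv; exact huv
              · rcases Classical.em (v = z) with rfl | h
                · exact huv
                · have e := hv h
                  have h2 : v' = z := by
                    by_contra h2
                    have e2 := hv' h2
                    rw [e2] at hvv; rw [e] at hvv; exact hvv rfl
                  rw [h2] at huv'; exact huv'
          · -- z ∉ {y1, y2}
            by_cases hc : ∃ c, (c = v ∨ c = v') ∧ c ≠ z ∧ c ≠ y1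
            · obtain ⟨c, hc0, hc1, hc2⟩ := hc
              refine Or.inl ⟨y1, c, hay1, ?_, fun h => hz1 h.symm, hc1, hc2⟩
              rcases hc0 with rfl | rfl
              exacts [huv, huv']
            by_cases hc' : ∃ c, (c = v ∨ c = v') ∧ c ≠ z ∧ c ≠ y2
            · obtain ⟨c, hc0, hc1, hc2⟩ := hc'
              refine Or.inl ⟨y2, c, hay2, ?_, fun h => hz2 h.symm, hc1, hc2⟩
              rcases hc0 with rfl | rfl
              exacts [huv, huv']
            · exfalso
              push_neg at hc hc'
              have h1v := hc v (Or.inl rfl)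
              have h1v' := hc v' (Or.inr rfl)
              have h2v := hc' v (Or.inl rfl)
              have h2v' := hc' v' (Or.inr rfl)
              -- v, v' ∈ {z, y1} and v, v' ∈ {z, y2}, v ≠ v', y1 ≠ y2 : contradiction
              by_cases hvz : v = z
              · subst hvz
                have e1 : v' = y1 := h1v' (fun h => hvv h.symm)
                have e2 : v' = y2 := h2v' (fun h => hvv h.symm)
                exact hy12 (e1.symm.trans e2)
              · have e1 : v = y1 := h1v hvz
                have e2 : v = y2 := h2v hvz
                exact hy12 (e1.symm.trans e2)
      rcases C1 with ⟨y, c, hy, hc, hyz, hcz, hcy⟩ | ⟨haz, y, hay, huy, huz, hyz⟩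
      · exact use3 y c hy hc hyz hcz hcy
      · -- degenerate: (a,z),(a,y),(u,y),(u,z) ∈ G, y ≠ z; get a third value t
        obtain ⟨t, htz, hty⟩ := avoid_two h12 h13 h23 z y
        obtain ⟨s, hst⟩ := hp2 t
        by_cases hsa : s = a
        · subst hsa
          exact h3 (s,t) (u,y) (w,z) hst huy hwz (Ne.symm hu) (Ne.symm hwa) (Ne.symm hwu)
            (fun h => hty h) htz (Ne.symm (fun h => hyz h.symm))
        by_cases hsu : s = u
        · subst hsu
          exact h3 (a,y) (s,t) (w,z) hay hst hwz (Ne.symm hu) (Ne.symm hwa)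
            (Ne.symm hwu) (fun h => hty h.symm) hyz (fun h => htz h)
        · exact h3 (a,z) (u,y) (s,t) haz huy hst (Ne.symm hu) (fun h => hsa h.symm)
            (fun h => hsu h.symm) (Ne.symm hyz) (fun h => htz h.symm) (fun h => hty h.symm)
    · -- u ≠ u'
      by_cases hy : (y1 ≠ v ∧ y1 ≠ v') ∨ (y2 ≠ v ∧ y2 ≠ v')
      · obtain ⟨y, hyG, hyv, hyv'⟩ : ∃ y, (a,y) ∈ G ∧ y ≠ v ∧ y ≠ v' := by
          rcases hy with ⟨h, h'⟩ | ⟨h, h'⟩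
          exacts [⟨y1, hay1, h, h'⟩, ⟨y2, hay2, h, h'⟩]
        exact h3 (u,v) (u',v') (a,y) huv huv' hyG huu hu hu' hvv
          (Ne.symm hyv) (Ne.symm hyv')
      · -- {y1,y2} = {v,v'}, so (a,v),(a,v') ∈ G
        push_neg at hy
        obtain ⟨hy1, hy2⟩ := hy
        have hav : (a, v) ∈ G ∧ (a, v') ∈ G := by
          by_cases hv1 : y1 = v
          · have h2 : y2 ≠ v := fun h => hy12 (hv1.trans h.symm)
            have h2' := hy2 h2
            exact ⟨by rw [← hv1]; exact hay1, by rw [← h2']; exact hay2⟩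
          · have h1' := hy1 hv1
            have h2 : y2 = v := by
              by_cases h : y2 = v
              · exact h
              · exact absurd (hy2 h) (fun e => hy12 (h1'.trans e.symm))
            exact ⟨by rw [← h2]; exact hay2, by rw [← h1']; exact hay1⟩
        obtain ⟨hav1, hav2⟩ := hav
        obtain ⟨t, htv, htv'⟩ := avoid_two h12 h13 h23 v v'
        obtain ⟨s, hst⟩ := hp2 t
        by_cases hsu : s ≠ u ∧ s ≠ a
        · exact h3 (u,v) (a,v') (s,t) huv hav2 hst hu (Ne.symm hsu.1) (Ne.symm hsu.2)
            hvv (Ne.symm htv) (Ne.symm htv')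
        by_cases hsu' : s ≠ u' ∧ s ≠ a
        · exact h3 (u',v') (a,v) (s,t) huv' hav1 hst hu' (Ne.symm hsu'.1) (Ne.symm hsu'.2)
            (Ne.symm hvv) (Ne.symm htv') (Ne.symm htv)
        · rw [not_and_or, not_ne_iff, not_ne_iff] at hsu hsu'
          have hsa : s = a := by
            rcases hsu with rfl | rfl
            · rcases hsu' with h | h
              · exact absurd h huu
              · exact h
            · rfl
          subst hsa
          exact h3 (s,t) (u,v) (u',v') hst huv huv' (Ne.symm hu) (Ne.symm hu') huu
            htv htv' hvv
  -- Step 3: conclude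
  by_cases hall : ∀ p ∈ G, p.1 = a
  · obtain ⟨y, hy⟩ := hp1 a
    exact ⟨a, y, fun p hp => Or.inl (hall p hp)⟩
  · push_neg at hall
    obtain ⟨p0, hp0, hp0a⟩ := hall
    refine ⟨a, p0.2, fun p hp => ?_⟩
    by_cases h : p.1 = a
    · exact Or.inl h
    · exact Or.inr (core p.1 p.2 p0.1 p0.2 (by simpa using hp) (by simpa using hp0) h hp0a)



theorem convergence_placement' (Γ X : Type*) [Group Γ]
    [TopologicalSpace X] [CompactSpace X] [TopologicalSpace.MetrizableSpace X]
    [MulAction Γ X]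
    (hconv : IsConvergenceAction Γ X)
    (hmin : ∀ x : X, Dense (MulAction.orbit Γ x))
    (hinf : Infinite Γ)
    (hcard : ∃ a b c : X, a ≠ b ∧ a ≠ c ∧ b ≠ c)
    (Sig : Set X) (hSc : IsClosed Sig) (hSne : Sig ≠ Set.univ)
    (O : Set X) (hO : IsOpen O) (hOne : O.Nonempty) :
    ∃ δ : Γ, δ • Sig ⊆ O := by
  classical
  letI : MetricSpace X := TopologicalSpace.metrizableSpaceMetric X
  obtain ⟨c1, c2, c3, h12, h13, h23⟩ := hcard
  haveI : Infinite Γ := hinf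
  set e : ℕ ↪ Γ := Infinite.natEmbedding Γ with he
  set 𝒰 : Ultrafilter ℕ := Ultrafilter.of Filter.cofinite with h𝒰
  have hUle : (𝒰 : Filter ℕ) ≤ Filter.cofinite := Ultrafilter.of_le _
  have hUinf : ∀ S : Set ℕ, S ∈ (𝒰 : Filter ℕ) → S.Infinite := by
    intro S hS hfin
    exact Filter.compl_notMem hS (hUle (Filter.mem_cofinite.2 (by simpa using hfin)))
  set G : Set (X × X) :=
    {p | ∀ U ∈ nhds p.1, ∀ V ∈ nhds p.2,
      {n : ℕ | ∃ x' ∈ U, (e n) • x' ∈ V} ∈ (𝒰 : Filter ℕ)} with hG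
  -- projections are onto
  have hp1 : ∀ x : X, ∃ y, (x, y) ∈ G := by
    intro x
    obtain ⟨y, hy⟩ := exists_ulim 𝒰 (fun n => (e n) • x)
    refine ⟨y, fun U hU V hV => ?_⟩
    filter_upwards [hy V hV] with n hn
    exact ⟨x, mem_of_mem_nhds hU, hn⟩
  have hp2 : ∀ y : X, ∃ x, (x, y) ∈ G := by
    intro y
    obtain ⟨x, hx⟩ := exists_ulim 𝒰 (fun n => (e n)⁻¹ • y)
    refine ⟨x, fun U hU V hV => ?_⟩
    filter_upwards [hx U hU] with n hn
    exact ⟨(e n)⁻¹ • y, hn, by rw [smul_inv_smul]; exact mem_of_mem_nhds hV⟩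
  -- no three pairwise transversal pairs in G
  have h3 : ∀ p q r : X × X, p ∈ G → q ∈ G → r ∈ G →
      p.1 ≠ q.1 → p.1 ≠ r.1 → q.1 ≠ r.1 → p.2 ≠ q.2 → p.2 ≠ r.2 → q.2 ≠ r.2 → False := by
    rintro ⟨x1, y1⟩ ⟨x2, y2⟩ ⟨x3, y3⟩ hG1 hG2 hG3 hx12 hx13 hx23 hy12 hy13 hy23
    simp only at hx12 hx13 hx23 hy12 hy13 hy23
    set m : ℝ := min (min (min (dist x1 x2) (dist x1 x3)) (dist x2 x3))
      (min (min (dist y1 y2) (dist y1 y3)) (dist y2 y3)) with hm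
    have hm0 : 0 < m := by
      refine lt_min (lt_min (lt_min ?_ ?_) ?_) (lt_min (lt_min ?_ ?_) ?_) <;>
        simp [dist_pos, hx12, hx13, hx23, hy12, hy13, hy23]
    have hmx12 : m ≤ dist x1 x2 :=
      (min_le_left _ _).trans ((min_le_left _ _).trans (min_le_left _ _))
    have hmx13 : m ≤ dist x1 x3 :=
      (min_le_left _ _).trans ((min_le_left _ _).trans (min_le_right _ _))
    have hmx23 : m ≤ dist x2 x3 := (min_le_left _ _).trans (min_le_right _ _)
    have hmy12 : m ≤ dist y1 y2 :=
      (min_le_right _ _).trans ((min_le_left _ _).trans (min_le_left _ _))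
    have hmy13 : m ≤ dist y1 y3 :=
      (min_le_right _ _).trans ((min_le_left _ _).trans (min_le_right _ _))
    have hmy23 : m ≤ dist y2 y3 := (min_le_right _ _).trans (min_le_right _ _)
    have sep : ∀ p q u v : X, m ≤ dist p q →
        u ∈ Metric.closedBall p (m/3) → v ∈ Metric.closedBall q (m/3) → u ≠ v := by
      intro p q u v h hu hv huv
      rw [Metric.mem_closedBall] at hu hv
      rw [huv] at hu
      have h1 := dist_triangle p v q
      rw [dist_comm p v] at h1
      linarith
    set K : Set (X × X × X) := Metric.closedBall x1 (m/3) ×ˢ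
      (Metric.closedBall x2 (m/3) ×ˢ Metric.closedBall x3 (m/3)) with hK
    set L : Set (X × X × X) := Metric.closedBall y1 (m/3) ×ˢ
      (Metric.closedBall y2 (m/3) ×ˢ Metric.closedBall y3 (m/3)) with hL
    have hKsub : K ⊆ distinctTriples X := by
      rintro ⟨u1, u2, u3⟩ ⟨h1, h2, h3'⟩
      exact ⟨sep x1 x2 u1 u2 hmx12 h1 h2, sep x1 x3 u1 u3 hmx13 h1 h3',
        sep x2 x3 u2 u3 hmx23 h2 h3'⟩
    have hLsub : L ⊆ distinctTriples X := by
      rintro ⟨u1, u2, u3⟩ ⟨h1, h2, h3'⟩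
      exact ⟨sep y1 y2 u1 u2 hmy12 h1 h2, sep y1 y3 u1 u3 hmy13 h1 h3',
        sep y2 y3 u2 u3 hmy23 h2 h3'⟩
    have hKc : IsCompact K :=
      (Metric.isClosed_closedBall.isCompact).prod
        ((Metric.isClosed_closedBall.isCompact).prod (Metric.isClosed_closedBall.isCompact))
    have hLc : IsCompact L :=
      (Metric.isClosed_closedBall.isCompact).prod
        ((Metric.isClosed_closedBall.isCompact).prod (Metric.isClosed_closedBall.isCompact))
    have hfin := hconv.2 K L hKsub hLsub hKc hLc
    have hS1 := hG1 (Metric.ball x1 (m/3)) (Metric.ball_mem_nhds _ (by linarith))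
      (Metric.ball y1 (m/3)) (Metric.ball_mem_nhds _ (by linarith))
    have hS2 := hG2 (Metric.ball x2 (m/3)) (Metric.ball_mem_nhds _ (by linarith))
      (Metric.ball y2 (m/3)) (Metric.ball_mem_nhds _ (by linarith))
    have hS3 := hG3 (Metric.ball x3 (m/3)) (Metric.ball_mem_nhds _ (by linarith))
      (Metric.ball y3 (m/3)) (Metric.ball_mem_nhds _ (by linarith))
    have hSmem := Filter.inter_mem (Filter.inter_mem hS1 hS2) hS3
    have hsub : (fun n => e n) '' ({n : ℕ | ∃ x' ∈ Metric.ball x1 (m/3), (e n) • x' ∈ Metric.ball y1 (m/3)}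
        ∩ {n : ℕ | ∃ x' ∈ Metric.ball x2 (m/3), (e n) • x' ∈ Metric.ball y2 (m/3)}
        ∩ {n : ℕ | ∃ x' ∈ Metric.ball x3 (m/3), (e n) • x' ∈ Metric.ball y3 (m/3)})
        ⊆ {g : Γ | ((fun p : X × X × X => (g • p.1, g • p.2.1, g • p.2.2)) '' K ∩ L).Nonempty} := by
      rintro - ⟨n, ⟨⟨⟨u1, hu1, hv1⟩, ⟨u2, hu2, hv2⟩⟩, ⟨u3, hu3, hv3⟩⟩, rfl⟩
      refine ⟨((e n) • u1, (e n) • u2, (e n) • u3), ⟨⟨(u1, u2, u3), ?_, rfl⟩, ?_⟩⟩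
      · exact ⟨Metric.ball_subset_closedBall hu1,
          Metric.ball_subset_closedBall hu2, Metric.ball_subset_closedBall hu3⟩
      · exact ⟨Metric.ball_subset_closedBall hv1,
          Metric.ball_subset_closedBall hv2, Metric.ball_subset_closedBall hv3⟩
    exact ((hUinf _ hSmem).image (e.injective.injOn)) (hfin.subset hsub)
  -- structure of G
  obtain ⟨a, b, hab⟩ := comb G h3 hp1 hp2 h12 h13 h23
  -- the collapsing property
  have collapse : ∀ R A : Set X, IsOpen R → IsOpen A → a ∈ R → b ∈ A →
      ∃ n : ℕ, ∀ x : X, x ∉ R → (e n) • x ∈ A := by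
    intro R A hRo hAo haR hbA
    by_contra hcon
    push_neg at hcon
    choose x hx1 hx2 using hcon
    obtain ⟨p, hp⟩ := exists_ulim 𝒰 x
    obtain ⟨q, hq⟩ := exists_ulim 𝒰 (fun n => (e n) • x n)
    have hpR : p ∉ R := by
      intro hpR
      obtain ⟨n, hn⟩ := (hUinf _ (hp R (hRo.mem_nhds hpR))).nonempty
      exact hx1 n hn
    have hqA : q ∉ A := by
      intro hqA
      obtain ⟨n, hn⟩ := (hUinf _ (hq A (hAo.mem_nhds hqA))).nonempty
      exact hx2 n hn
    have hpq : (p, q) ∈ G := by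
      intro U hU V hV
      filter_upwards [hp U hU, hq V hV] with n h1 h2
      exact ⟨x n, h1, h2⟩
    rcases hab (p, q) hpq with h | h
    · have h' : p = a := h
      exact hpR (by rw [h']; exact haR)
    · have h' : q = b := h
      exact hqA (by rw [h']; exact hbA)
  -- final assembly
  obtain ⟨pt, hpt⟩ := (Set.ne_univ_iff_exists_notMem Sig).1 hSne
  obtain ⟨z1, hz1o, hz1⟩ := (hmin a).exists_mem_open (isOpen_compl_iff.2 hSc) ⟨pt, hpt⟩
  obtain ⟨γ, hγ⟩ := MulAction.mem_orbit_iff.1 hz1o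
  obtain ⟨z2, hz2o, hz2⟩ := (hmin b).exists_mem_open hO hOne
  obtain ⟨h2, hh2⟩ := MulAction.mem_orbit_iff.1 hz2o
  have hγa : γ • a ∉ Sig := by rw [hγ]; exact hz1
  have hh2b : h2 • b ∈ O := by rw [hh2]; exact hz2
  have hclosed : IsClosed (γ⁻¹ • Sig) := by
    have : γ⁻¹ • Sig = (fun x : X => γ⁻¹ • x) '' Sig := by
      ext w; simp [Set.mem_smul_set]
    rw [this]
    exact ((hSc.isCompact).image (hconv.1 γ⁻¹)).isClosed
  obtain ⟨n, hn⟩ := collapse ((γ⁻¹ • Sig)ᶜ) ((fun x : X => h2 • x) ⁻¹' O)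
    hclosed.isOpen_compl (hO.preimage (hconv.1 h2))
    (by simp only [Set.mem_compl_iff, Set.mem_inv_smul_set_iff]; exact hγa)
    hh2b
  refine ⟨h2 * (e n) * γ⁻¹, ?_⟩
  rintro - ⟨σ, hσ, rfl⟩
  show (h2 * (e n) * γ⁻¹) • σ ∈ O
  rw [mul_smul, mul_smul]
  have hmem : γ⁻¹ • σ ∉ ((γ⁻¹ • Sig)ᶜ) := by
    simp only [Set.mem_compl_iff, not_not]
    exact Set.smul_mem_smul_set hσ
  exact hn (γ⁻¹ • σ) hmem


/-- Placement lemma: in a minimal non-elementary convergence action, any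
proper closed subset can be moved into any non-empty open subset by some group
element. -/
theorem convergence_placement (Γ X : Type*) [Group Γ]
    [TopologicalSpace X] [CompactSpace X] [TopologicalSpace.MetrizableSpace X]
    [MulAction Γ X]
    (hconv : IsConvergenceAction Γ X)
    (hmin : IsMinimalAction Γ X)
    (hne : IsNonElementaryAction Γ X)
    (hcard : ∃ a b c : X, a ≠ b ∧ a ≠ c ∧ b ≠ c)
    (Sig : Set X) (hSc : IsClosed Sig) (hSne : Sig ≠ Set.univ)
    (O : Set X) (hO : IsOpen O) (hOne : O.Nonempty) :
    ∃ δ : Γ, δ • Sig ⊆ O := by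
  exact convergence_placement' Γ X hconv hmin hne.1 hcard Sig hSc hSne O hO hOne
end

section
/- Density of loxodromic axes: if Γ is a non-elementary convergence group acting minimally on X and g ∈ Γ is loxodromic, then for any disjoint non-empty open sets U, V ⊆ X with U ∪ V ≠ X, there is a loxodromic element h ∈ Γ with h⁺ ∈ U and h⁻ ∈ V; in particular the set of pairs (h⁻, h⁺) over loxodromic h is dense in X × X. -/
open Pointwise

/-- `g` is loxodromic with attracting point `p` and repelling point `m`:
`p ≠ m` are fixed by `g` and iterates of `g` attract the complement of any
neighbourhood of `m` into any neighbourhood of `p`. -/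
def IsLoxodromic {Γ X : Type*} [Group Γ] [TopologicalSpace X] [MulAction Γ X]
    (g : Γ) (p m : X) : Prop :=
  p ≠ m ∧ g • p = p ∧ g • m = m ∧
  ∀ R ∈ nhds m, ∀ A ∈ nhds p,
    ∃ n₀ : ℕ, ∀ n ≥ n₀, ∀ x : X, x ∉ R → g ^ n • x ∈ A

section LoxAux

open Filter Metric Set

set_option linter.unusedSectionVars false

variable {Γ X : Type*} [Group Γ] [MetricSpace X] [CompactSpace X] [MulAction Γ X]

lemma lox_factA (hconv : IsConvergenceAction Γ X) (h : Γ)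
    (hinj : Function.Injective fun n : ℤ => h ^ n)
    {x y w : X} (hxy : x ≠ y) (hxw : x ≠ w) (hyw : y ≠ w) {δ : ℝ} (hδ : 0 < δ) :
    {n : ℤ | δ ≤ dist (h ^ n • x) (h ^ n • y) ∧ δ ≤ dist (h ^ n • x) (h ^ n • w)
      ∧ δ ≤ dist (h ^ n • y) (h ^ n • w)}.Finite := by
  set T : Set (X × X × X) :=
    {t | δ ≤ dist t.1 t.2.1 ∧ δ ≤ dist t.1 t.2.2 ∧ δ ≤ dist t.2.1 t.2.2} with hT
  have c1 : Continuous fun t : X × X × X => dist t.1 t.2.1 :=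
    continuous_fst.dist (continuous_fst.comp continuous_snd)
  have c2 : Continuous fun t : X × X × X => dist t.1 t.2.2 :=
    continuous_fst.dist (continuous_snd.comp continuous_snd)
  have c3 : Continuous fun t : X × X × X => dist t.2.1 t.2.2 :=
    (continuous_fst.comp continuous_snd).dist (continuous_snd.comp continuous_snd)
  have hTclosed : IsClosed T := by
    have : T = (fun t : X × X × X => dist t.1 t.2.1) ⁻¹' Set.Ici δ ∩
        ((fun t : X × X × X => dist t.1 t.2.2) ⁻¹' Set.Ici δ ∩
         (fun t : X × X × X => dist t.2.1 t.2.2) ⁻¹' Set.Ici δ) := by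
      ext t; simp [hT, Set.mem_Ici, and_assoc]
    rw [this]
    exact ((isClosed_Ici.preimage c1).inter ((isClosed_Ici.preimage c2).inter
      (isClosed_Ici.preimage c3)))
  have hTcomp : IsCompact T := hTclosed.isCompact
  have hTsub : T ⊆ distinctTriples X := by
    rintro t ⟨h1, h2, h3⟩
    exact ⟨dist_pos.1 (lt_of_lt_of_le hδ h1), dist_pos.1 (lt_of_lt_of_le hδ h2),
      dist_pos.1 (lt_of_lt_of_le hδ h3)⟩
  have hKsub : ({(x, y, w)} : Set (X × X × X)) ⊆ distinctTriples X := by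
    simp only [Set.singleton_subset_iff]; exact ⟨hxy, hxw, hyw⟩
  have hfin := hconv.2 _ _ hKsub hTsub isCompact_singleton hTcomp
  refine (hfin.preimage (hinj.injOn)).subset ?_
  rintro n ⟨d1, d2, d3⟩
  exact ⟨(h ^ n • x, h ^ n • y, h ^ n • w),
    ⟨(x, y, w), rfl, rfl⟩, d1, d2, d3⟩

lemma lox_factA_nat (hconv : IsConvergenceAction Γ X) (h : Γ)
    (hinj : Function.Injective fun n : ℤ => h ^ n)
    {x y w : X} (hxy : x ≠ y) (hxw : x ≠ w) (hyw : y ≠ w) {δ : ℝ} (hδ : 0 < δ) :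
    {n : ℕ | δ ≤ dist (h ^ n • x) (h ^ n • y) ∧ δ ≤ dist (h ^ n • x) (h ^ n • w)
      ∧ δ ≤ dist (h ^ n • y) (h ^ n • w)}.Finite := by
  have hZ := lox_factA hconv h hinj hxy hxw hyw hδ
  have hcast : Function.Injective (fun n : ℕ => (n : ℤ)) := fun a b hab => Int.natCast_inj.mp hab
  refine (hZ.preimage hcast.injOn).subset ?_
  intro n hn
  simpa [zpow_natCast] using hn


lemma lox_pow_smul_succ (h : Γ) (n : ℕ) (x : X) :
    h ^ (n + 1) • x = h ^ n • (h • x) := by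
  rw [pow_succ, mul_smul]

lemma lox_pow_smul_succ' (h : Γ) (n : ℕ) (x : X) :
    h ^ (n + 1) • x = h • (h ^ n • x) := by
  rw [pow_succ', mul_smul]

lemma lox_set_step (h : Γ) {C : Set X} (h1 : ∀ x ∈ C, h • x ∈ C) (n : ℕ) :
    h ^ (n + 1) • C ⊆ h ^ n • C := by
  rw [pow_succ, mul_smul]
  refine Set.smul_set_mono ?_
  rintro y ⟨c, hc, rfl⟩
  exact h1 c hc

lemma lox_set_anti (h : Γ) {C : Set X} (h1 : ∀ x ∈ C, h • x ∈ C) :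
    ∀ {m n : ℕ}, m ≤ n → h ^ n • C ⊆ h ^ m • C := by
  intro m n hmn
  induction n, hmn using Nat.le_induction with
  | base => exact subset_rfl
  | succ n hmn ih => exact (lox_set_step h h1 n).trans ih

lemma lox_eventually_subset (hcont : ∀ g : Γ, Continuous fun x : X => g • x) (h : Γ)
    {C : Set X} (hC : IsCompact C) (h1 : ∀ x ∈ C, h • x ∈ C)
    {A : Set X} (hA : IsOpen A) (hKA : (⋂ n : ℕ, h ^ n • C) ⊆ A) :
    ∃ n₀ : ℕ, ∀ n ≥ n₀, h ^ n • C ⊆ A := by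
  have hcomp : ∀ n : ℕ, IsCompact (h ^ n • C) := by
    intro n
    have : h ^ n • C = (fun x : X => h ^ n • x) '' C := (Set.image_smul).symm
    rw [this]
    exact hC.image (hcont _)
  suffices hex : ∃ n₀ : ℕ, h ^ n₀ • C ⊆ A by
    obtain ⟨n₀, hn₀⟩ := hex
    exact ⟨n₀, fun n hn => (lox_set_anti h h1 hn).trans hn₀⟩
  by_contra hcon
  push_neg at hcon
  have hne : ∀ n : ℕ, ((h ^ n • C) ∩ Aᶜ).Nonempty := by
    intro n
    obtain ⟨x, hx, hxA⟩ := Set.not_subset.1 (hcon n)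
    exact ⟨x, hx, hxA⟩
  have hmain := IsCompact.nonempty_iInter_of_sequence_nonempty_isCompact_isClosed
    (fun n => (h ^ n • C) ∩ Aᶜ)
    (fun n => Set.inter_subset_inter_left _ (lox_set_step h h1 n))
    hne ((hcomp 0).inter_right hA.isClosed_compl)
    (fun n => ((hcomp n).isClosed).inter hA.isClosed_compl)
  obtain ⟨x, hx⟩ := hmain
  have hx1 : x ∈ ⋂ n : ℕ, h ^ n • C := by
    rw [Set.mem_iInter]
    intro n
    exact (Set.mem_iInter.1 hx n).1
  exact (Set.mem_iInter.1 hx 0).2 (hKA hx1)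

lemma lox_K_nonempty (hcont : ∀ g : Γ, Continuous fun x : X => g • x) (h : Γ)
    {C : Set X} (hC : IsCompact C) (hCne : C.Nonempty) (h1 : ∀ x ∈ C, h • x ∈ C) :
    (⋂ n : ℕ, h ^ n • C).Nonempty := by
  have hcomp : ∀ n : ℕ, IsCompact (h ^ n • C) := by
    intro n
    have : h ^ n • C = (fun x : X => h ^ n • x) '' C := (Set.image_smul).symm
    rw [this]
    exact hC.image (hcont _)
  exact IsCompact.nonempty_iInter_of_sequence_nonempty_isCompact_isClosed
    (fun n => h ^ n • C) (lox_set_step h h1)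
    (fun n => hCne.smul_set) (hcomp 0) (fun n => (hcomp n).isClosed)

lemma lox_K_compact (hcont : ∀ g : Γ, Continuous fun x : X => g • x) (h : Γ)
    {C : Set X} (hC : IsCompact C) :
    IsCompact (⋂ n : ℕ, h ^ n • C) ∧ IsClosed (⋂ n : ℕ, h ^ n • C) := by
  have hcl : IsClosed (⋂ n : ℕ, h ^ n • C) := by
    refine isClosed_iInter fun n => ?_
    have : h ^ n • C = (fun x : X => h ^ n • x) '' C := (Set.image_smul).symm
    rw [this]
    exact (hC.image (hcont _)).isClosed
  exact ⟨hcl.isCompact, hcl⟩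

lemma lox_K_fwd (h : Γ) {C : Set X} (h1 : ∀ x ∈ C, h • x ∈ C) :
    ∀ x ∈ (⋂ n : ℕ, h ^ n • C), h • x ∈ ⋂ n : ℕ, h ^ n • C := by
  intro x hx
  rw [Set.mem_iInter] at hx ⊢
  intro n
  have hx' := hx n
  have : h • x ∈ h ^ (n + 1) • C := by
    rw [pow_succ', mul_smul]
    exact Set.smul_mem_smul_set hx'
  exact lox_set_step h h1 n this

lemma lox_K_bwd (h : Γ) {C : Set X} :
    ∀ x ∈ (⋂ n : ℕ, h ^ n • C), h⁻¹ • x ∈ ⋂ n : ℕ, h ^ n • C := by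
  intro x hx
  rw [Set.mem_iInter] at hx ⊢
  intro n
  have hx' := hx (n + 1)
  rw [pow_succ', mul_smul, Set.mem_smul_set_iff_inv_smul_mem] at hx'
  exact hx'

lemma lox_zpow_mem (h : Γ) {K : Set X}
    (hf : ∀ x ∈ K, h • x ∈ K) (hb : ∀ x ∈ K, h⁻¹ • x ∈ K) :
    ∀ (n : ℤ), ∀ x ∈ K, h ^ n • x ∈ K := by
  intro n
  induction n using Int.induction_on with
  | zero => intro x hx; simpa using hx
  | succ k ih =>
      intro x hx
      have : h ^ ((k : ℤ) + 1) • x = h ^ (k : ℤ) • (h • x) := by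
        rw [zpow_add_one, mul_smul]
      rw [this]
      exact ih _ (hf x hx)
  | pred k ih =>
      intro x hx
      have : h ^ (-(k : ℤ) - 1) • x = h ^ (-(k : ℤ)) • (h⁻¹ • x) := by
        rw [zpow_sub_one, mul_smul]
      rw [this]
      exact ih _ (hb x hx)


lemma lox_sep {S S₂ : Set X} (hS : IsCompact S) (hSne : S.Nonempty)
    (hS₂ : IsCompact S₂) (hS₂ne : S₂.Nonempty) (hdisj : Disjoint S S₂) :
    ∃ η > 0, ∀ u ∈ S, ∀ v ∈ S₂, η ≤ dist u v := by
  obtain ⟨u₀, hu₀S, hmin⟩ := hS.exists_isMinOn hSne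
    (Metric.continuous_infDist_pt S₂).continuousOn
  have hu₀ : u₀ ∉ S₂ := fun hc => (hdisj.ne_of_mem hu₀S hc) rfl
  have hpos : 0 < Metric.infDist u₀ S₂ :=
    (hS₂.isClosed.notMem_iff_infDist_pos hS₂ne).1 hu₀
  refine ⟨Metric.infDist u₀ S₂, hpos, fun u hu v hv => ?_⟩
  calc Metric.infDist u₀ S₂ ≤ Metric.infDist u S₂ := hmin hu
    _ ≤ dist u v := Metric.infDist_le_dist_of_mem hv

lemma lox_exists_fixed (hconv : IsConvergenceAction Γ X) (h : Γ)
    (hinj : Function.Injective fun n : ℤ => h ^ n)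
    {S S₂ : Set X} (hS : IsCompact S) (hSne : S.Nonempty)
    (hS₂ : IsCompact S₂) (hS₂ne : S₂.Nonempty) (hdisj : Disjoint S S₂)
    (hSinv : ∀ x ∈ S, h • x ∈ S) (hS₂inv : ∀ x ∈ S₂, h • x ∈ S₂) :
    ∃ q ∈ S, h • q = q := by
  obtain ⟨y, hy⟩ := hSne
  by_cases hfix : h • y = y
  · exact ⟨y, hy, hfix⟩
  obtain ⟨c, hc⟩ := hS₂ne
  obtain ⟨η, hη, hsep⟩ := lox_sep hS ⟨y, hy⟩ hS₂ ⟨c, hc⟩ hdisj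
  have horbS : ∀ n : ℕ, h ^ n • y ∈ S := by
    intro n
    induction n with
    | zero => simpa using hy
    | succ n ih => rw [lox_pow_smul_succ']; exact hSinv _ ih
  have horbS' : ∀ n : ℕ, h ^ n • (h • y) ∈ S := by
    intro n
    have : h ^ n • (h • y) = h ^ (n + 1) • y := (lox_pow_smul_succ h n y).symm
    rw [this]; exact horbS _
  have horbS₂ : ∀ n : ℕ, h ^ n • c ∈ S₂ := by
    intro n
    induction n with
    | zero => simpa using hc
    | succ n ih => rw [lox_pow_smul_succ']; exact hS₂inv _ ih
  have hyhy : y ≠ h • y := fun e => hfix e.symm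
  have hyc : y ≠ c := fun e => (hdisj.ne_of_mem hy hc) e
  have hhyc : h • y ≠ c := fun e => (hdisj.ne_of_mem (hSinv y hy) hc) e
  have key : ∀ k : ℕ, ∃ n : ℕ, dist (h ^ n • y) (h ^ n • (h • y)) < 1 / (k + 1) := by
    intro k
    have hδ : (0 : ℝ) < min (1 / (k + 1 : ℝ)) η := by
      refine lt_min ?_ hη
      positivity
    have hfin := lox_factA_nat hconv h hinj hyhy hyc hhyc hδ
    obtain ⟨b, hb⟩ := hfin.bddAbove
    refine ⟨b + 1, ?_⟩
    have hnot : (b + 1) ∉ {n : ℕ | min (1 / (k + 1 : ℝ)) η ≤ dist (h ^ n • y) (h ^ n • (h • y))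
        ∧ min (1 / (k + 1 : ℝ)) η ≤ dist (h ^ n • y) (h ^ n • c)
        ∧ min (1 / (k + 1 : ℝ)) η ≤ dist (h ^ n • (h • y)) (h ^ n • c)} := by
      intro hmem
      have := hb hmem
      omega
    have h2 : min (1 / (k + 1 : ℝ)) η ≤ dist (h ^ (b + 1) • y) (h ^ (b + 1) • c) :=
      le_trans (min_le_right _ _) (hsep _ (horbS _) _ (horbS₂ _))
    have h3 : min (1 / (k + 1 : ℝ)) η ≤ dist (h ^ (b + 1) • (h • y)) (h ^ (b + 1) • c) :=
      le_trans (min_le_right _ _) (hsep _ (horbS' _) _ (horbS₂ _))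
    by_contra hcon
    push_neg at hcon
    exact hnot ⟨le_trans (min_le_left _ _) hcon, h2, h3⟩
  choose ns hns using key
  set u : ℕ → X := fun k => h ^ (ns k) • y with hu
  have huS : ∀ k, u k ∈ S := fun k => horbS _
  have hud : ∀ k, dist (u k) (h • u k) < 1 / (k + 1) := by
    intro k
    have : h • u k = h ^ (ns k) • (h • y) := by
      rw [hu]
      simp only []
      rw [smul_smul, smul_smul, ← pow_succ', ← pow_succ]
    rw [this]
    exact hns k
  obtain ⟨q, hqS, φ, hφ, hconv_u⟩ := hS.tendsto_subseq huS
  refine ⟨q, hqS, ?_⟩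
  have h1 : Filter.Tendsto (fun j => h • u (φ j)) Filter.atTop (nhds (h • q)) :=
    (((hconv.1 h).tendsto q).comp hconv_u)
  have h2 : Filter.Tendsto (fun j => dist (u (φ j)) (h • u (φ j))) Filter.atTop
      (nhds (dist q (h • q))) := hconv_u.dist h1
  have h3 : Filter.Tendsto (fun j => dist (u (φ j)) (h • u (φ j))) Filter.atTop (nhds 0) := by
    refine squeeze_zero (fun j => dist_nonneg) (fun j => (hud (φ j)).le) ?_
    exact tendsto_one_div_add_atTop_nhds_zero_nat.comp hφ.tendsto_atTop
  have := tendsto_nhds_unique h2 h3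
  exact (eq_of_dist_eq_zero this).symm

lemma lox_attract (hcont : ∀ g : Γ, Continuous fun x : X => g • x) (h : Γ)
    {C C' : Set X} (hC : IsCompact C) (hC' : IsCompact C')
    (h1 : ∀ x ∈ C, h • x ∈ C) (h2 : ∀ x ∈ C', h⁻¹ • x ∈ C')
    (h3 : ∀ x, x ∉ C → h⁻¹ • x ∈ C')
    {A R : Set X} (hA : IsOpen A) (hKA : (⋂ n : ℕ, h ^ n • C) ⊆ A)
    (hR : IsOpen R) (hLR : (⋂ n : ℕ, (h⁻¹) ^ n • C') ⊆ R) :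
    ∃ n₀ : ℕ, ∀ n ≥ n₀, ∀ x ∉ R, h ^ n • x ∈ A := by
  obtain ⟨n₂, hn₂⟩ := lox_eventually_subset hcont h hC h1 hA hKA
  obtain ⟨n₁, hn₁⟩ := lox_eventually_subset hcont h⁻¹ hC' h2 hR hLR
  have claim : ∀ k : ℕ, ∀ x : X, h ^ (k + 1) • x ∉ C → x ∈ (h⁻¹) ^ k • C' := by
    intro k
    induction k with
    | zero =>
        intro x hx
        simp only [pow_zero, one_smul] at hx ⊢
        have := h3 (h • x) (by simpa using hx)
        simpa using this
    | succ k ih =>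
        intro x hx
        have hx' : h ^ (k + 1) • (h • x) ∉ C := by
          rw [← lox_pow_smul_succ]
          exact hx
        have := ih (h • x) hx'
        have hmem : h⁻¹ • (h • x) ∈ h⁻¹ • ((h⁻¹) ^ k • C') := Set.smul_mem_smul_set this
        rw [inv_smul_smul] at hmem
        rw [smul_smul, ← pow_succ'] at hmem
        exact hmem
  refine ⟨n₁ + 1 + n₂, fun n hn x hx => ?_⟩
  have hxC : h ^ (n₁ + 1) • x ∈ C := by
    by_contra hcon
    exact hx (hn₁ n₁ le_rfl (claim n₁ x hcon))
  have hsub : n - (n₁ + 1) + (n₁ + 1) = n := by omega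
  have hsplit : h ^ n • x = h ^ (n - (n₁ + 1)) • (h ^ (n₁ + 1) • x) := by
    rw [smul_smul, ← pow_add, hsub]
  rw [hsplit]
  exact hn₂ _ (by omega) (Set.smul_mem_smul_set hxC)


lemma lox_pow_fixed (h : Γ) {p : X} (hp : h • p = p) : ∀ n : ℕ, h ^ n • p = p := by
  intro n
  induction n with
  | zero => simp
  | succ n ih => rw [lox_pow_smul_succ', ih, hp]

lemma lox_tendsto (h : Γ) {p m x : X} {K : Set X} (hK : IsCompact K) (hpK : p ∈ K)
    (hmK : m ∉ K) (hxp : x ≠ p) (hxm : x ≠ m) (hpm : p ≠ m)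
    (hp : h • p = p) (hm : h • m = m)
    (hattr : ∀ A : Set X, IsOpen A → K ⊆ A → ∃ n₀ : ℕ, ∀ n ≥ n₀, h ^ n • x ∈ A)
    (hfac : ∀ δ : ℝ, 0 < δ →
      {n : ℕ | δ ≤ dist (h ^ n • x) (h ^ n • p) ∧ δ ≤ dist (h ^ n • x) (h ^ n • m)
        ∧ δ ≤ dist (h ^ n • p) (h ^ n • m)}.Finite) :
    Filter.Tendsto (fun n : ℕ => h ^ n • x) Filter.atTop (nhds p) := by
  have hpn := lox_pow_fixed h hp
  have hmn := lox_pow_fixed h hm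
  rw [Metric.tendsto_atTop]
  intro ε hε
  have hηpos : 0 < Metric.infDist m K :=
    (hK.isClosed.notMem_iff_infDist_pos ⟨p, hpK⟩).1 hmK
  set η := Metric.infDist m K with hη
  set A : Set X := {u | η / 2 < dist u m} with hA
  have hAopen : IsOpen A := by
    have : A = (fun u => dist u m) ⁻¹' Set.Ioi (η / 2) := rfl
    rw [this]
    exact isOpen_Ioi.preimage (continuous_id.dist continuous_const)
  have hKA : K ⊆ A := by
    intro u hu
    have h1 : η ≤ dist m u := Metric.infDist_le_dist_of_mem hu
    have : η / 2 < dist u m := by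
      rw [dist_comm]
      linarith
    exact this
  obtain ⟨N₁, hN₁⟩ := hattr A hAopen hKA
  set δ := min ε (min (η / 2) (dist p m)) with hδdef
  have hδ : 0 < δ := by
    refine lt_min hε (lt_min (by linarith) ?_)
    exact dist_pos.2 hpm
  obtain ⟨b, hb⟩ := (hfac δ hδ).bddAbove
  refine ⟨max N₁ (b + 1), fun n hn => ?_⟩
  have hn₁ : n ≥ N₁ := le_trans (le_max_left _ _) hn
  have hn₂ : n ≥ b + 1 := le_trans (le_max_right _ _) hn
  have hnot : n ∉ {n : ℕ | δ ≤ dist (h ^ n • x) (h ^ n • p) ∧ δ ≤ dist (h ^ n • x) (h ^ n • m)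
      ∧ δ ≤ dist (h ^ n • p) (h ^ n • m)} := by
    intro hmem
    have := hb hmem
    omega
  have c2 : δ ≤ dist (h ^ n • x) (h ^ n • m) := by
    rw [hmn]
    have := hN₁ n hn₁
    have h1 : η / 2 < dist (h ^ n • x) m := this
    exact le_trans (le_trans (min_le_right _ _) (min_le_left _ _)) h1.le
  have c3 : δ ≤ dist (h ^ n • p) (h ^ n • m) := by
    rw [hpn, hmn]
    exact le_trans (min_le_right _ _) (min_le_right _ _)
  by_contra hcon
  push_neg at hcon
  have c1 : δ ≤ dist (h ^ n • x) (h ^ n • p) := by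
    rw [hpn]
    exact le_trans (min_le_left _ _) hcon
  exact hnot ⟨c1, c2, c3⟩

lemma lox_singleton (hconv : IsConvergenceAction Γ X) (h : Γ)
    (hinj : Function.Injective fun n : ℤ => h ^ n)
    {K : Set X} {p m z : X}
    (hKinv : ∀ (n : ℤ), ∀ x ∈ K, h ^ n • x ∈ K)
    (hzK : z ∉ K) (hzfree : ∀ n : ℤ, n ≠ 0 → h ^ n • z ≠ z)
    (hzp : z ≠ p) (hzm : z ≠ m) (hpm : p ≠ m)
    (t1 : Filter.Tendsto (fun n : ℕ => h ^ n • z) Filter.atTop (nhds p))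
    (t2 : Filter.Tendsto (fun n : ℕ => (h⁻¹) ^ n • z) Filter.atTop (nhds m))
    {a : X} (haK : a ∈ K) (hap : a ≠ p)
    (t3 : Filter.Tendsto (fun n : ℕ => (h⁻¹) ^ n • a) Filter.atTop (nhds p)) :
    False := by
  have haz : a ≠ z := fun e => hzK (e ▸ haK)
  have hexp : ∀ (n : ℕ) (w : X), (h⁻¹) ^ (n + 1) • w = h ^ (-(n + 1 : ℕ) : ℤ) • w := by
    intro n w
    rw [zpow_neg, zpow_natCast, inv_pow]
  have hmemK : ∀ n : ℕ, (h⁻¹) ^ (n + 1) • a ∈ K := by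
    intro n
    rw [hexp]
    exact hKinv _ a haK
  -- source triples
  set f : ℕ → X × X × X := fun n => ((h⁻¹) ^ (n + 1) • a, (h⁻¹) ^ (n + 1) • z, z) with hf
  have tf : Filter.Tendsto f Filter.atTop (nhds (p, m, z)) := by
    refine Filter.Tendsto.prodMk_nhds ?_ (Filter.Tendsto.prodMk_nhds ?_ tendsto_const_nhds)
    · exact t3.comp (Filter.tendsto_add_atTop_nat 1)
    · exact t2.comp (Filter.tendsto_add_atTop_nat 1)
  have hfcof : Filter.Tendsto f Filter.cofinite (nhds (p, m, z)) := by
    rwa [Nat.cofinite_eq_atTop]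
  have hsrc_comp : IsCompact (insert (p, m, z) (Set.range f)) :=
    hfcof.isCompact_insert_range_of_cofinite
  have hsrc_sub : insert (p, m, z) (Set.range f) ⊆ distinctTriples X := by
    rintro t (rfl | ⟨n, rfl⟩)
    · exact ⟨hpm, fun e => hzp e.symm, fun e => hzm e.symm⟩
    · show ((h⁻¹) ^ (n + 1) • a, (h⁻¹) ^ (n + 1) • z, z) ∈ distinctTriples X
      refine ⟨fun e => haz (smul_left_cancel _ e), ?_, ?_⟩
      · intro e
        have e' : (h⁻¹) ^ (n + 1) • a = z := e
        exact hzK (e' ▸ hmemK n)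
      · intro e
        have e' : (h⁻¹) ^ (n + 1) • z = z := e
        rw [hexp] at e'
        refine hzfree _ ?_ e'
        omega
  -- target triples
  set f' : ℕ → X × X × X := fun n => (a, z, h ^ (n + 1) • z) with hf'
  have tf' : Filter.Tendsto f' Filter.atTop (nhds (a, z, p)) := by
    refine Filter.Tendsto.prodMk_nhds tendsto_const_nhds
      (Filter.Tendsto.prodMk_nhds tendsto_const_nhds ?_)
    exact t1.comp (Filter.tendsto_add_atTop_nat 1)
  have hf'cof : Filter.Tendsto f' Filter.cofinite (nhds (a, z, p)) := by
    rwa [Nat.cofinite_eq_atTop]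
  have htgt_comp : IsCompact (insert (a, z, p) (Set.range f')) :=
    hf'cof.isCompact_insert_range_of_cofinite
  have hpowK : ∀ n : ℕ, ∀ x ∈ K, h ^ (n + 1) • x ∈ K := by
    intro n x hx
    have := hKinv ((n + 1 : ℕ) : ℤ) x hx
    rwa [zpow_natCast] at this
  have htgt_sub : insert (a, z, p) (Set.range f') ⊆ distinctTriples X := by
    rintro t (rfl | ⟨n, rfl⟩)
    · exact ⟨haz, hap, hzp⟩
    · show (a, z, h ^ (n + 1) • z) ∈ distinctTriples X
      refine ⟨haz, ?_, ?_⟩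
      · intro e
        have e' : a = h ^ (n + 1) • z := e
        have hz' : z = (h ^ (n + 1))⁻¹ • a := by
          rw [e', inv_smul_smul]
        rw [← inv_pow, hexp] at hz'
        refine hzK ?_
        rw [hz']
        exact hKinv _ a haK
      · intro e
        have e' : z = h ^ (n + 1) • z := e
        have e'' : h ^ ((n + 1 : ℕ) : ℤ) • z = z := by
          rw [zpow_natCast]
          exact e'.symm
        refine hzfree _ ?_ e''
        omega
  have hfin := hconv.2 _ _ hsrc_sub htgt_sub hsrc_comp htgt_comp
  have hcancel : ∀ (n : ℕ) (w : X), h ^ (n + 1) • ((h⁻¹) ^ (n + 1) • w) = w := by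
    intro n w
    rw [inv_pow, smul_smul, mul_inv_cancel, one_smul]
  have hsub : ∀ n : ℕ, h ^ (n + 1) ∈
      {g : Γ | ((fun p : X × X × X => (g • p.1, g • p.2.1, g • p.2.2)) ''
        (insert (p, m, z) (Set.range f)) ∩ (insert (a, z, p) (Set.range f'))).Nonempty} := by
    intro n
    refine ⟨(a, z, h ^ (n + 1) • z), ⟨f n, Set.mem_insert_of_mem _ ⟨n, rfl⟩, ?_⟩, ?_⟩
    · show (h ^ (n+1) • ((h⁻¹) ^ (n + 1) • a), h ^ (n+1) • ((h⁻¹) ^ (n + 1) • z),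
        h ^ (n+1) • z) = (a, z, h ^ (n + 1) • z)
      rw [hcancel, hcancel]
    · exact Set.mem_insert_of_mem _ ⟨n, rfl⟩
  have hinj' : Function.Injective fun n : ℕ => h ^ (n + 1) := by
    intro i j e
    have : h ^ ((i + 1 : ℕ) : ℤ) = h ^ ((j + 1 : ℕ) : ℤ) := by
      rw [zpow_natCast, zpow_natCast]
      exact e
    have := hinj this
    omega
  exact (Set.infinite_of_injective_forall_mem hinj' hsub) hfin


lemma lox_master (hconv : IsConvergenceAction Γ X)
    (h : Γ) {U V : Set X} (hU : IsOpen U) (hV : IsOpen V)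
    (hUne : U.Nonempty) (hVne : V.Nonempty) (hUV : Disjoint U V)
    (hcover : U ∪ V ≠ Set.univ)
    (hmap : ∀ x : X, x ∉ V → h • x ∈ U) :
    ∃ p m : X, IsLoxodromic h p m ∧ p ∈ U ∧ m ∈ V := by
  have hcont := hconv.1
  obtain ⟨z, hz⟩ : ∃ z : X, z ∉ U ∪ V := by
    by_contra hcon
    push_neg at hcon
    exact hcover (Set.eq_univ_of_forall hcon)
  have hzU : z ∉ U := fun hc => hz (Or.inl hc)
  have hzV : z ∉ V := fun hc => hz (Or.inr hc)
  set C := closure U with hCdef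
  set C' := closure V with hC'def
  have hCcomp : IsCompact C := isClosed_closure.isCompact
  have hC'comp : IsCompact C' := isClosed_closure.isCompact
  have hCV : ∀ x ∈ C, x ∉ V := by
    intro x hx hxV
    exact (hUV.closure_left hV).ne_of_mem hx hxV rfl
  have hC'U : ∀ x ∈ C', x ∉ U := by
    intro x hx hxU
    exact (hUV.symm.closure_left hU).ne_of_mem hx hxU rfl
  have hmap' : ∀ x : X, x ∉ U → h⁻¹ • x ∈ V := by
    intro x hx
    by_contra hcon
    have := hmap _ hcon
    rw [smul_inv_smul] at this
    exact hx this
  have h1 : ∀ x ∈ C, h • x ∈ C := fun x hx => subset_closure (hmap x (hCV x hx))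
  have h2 : ∀ x ∈ C', h⁻¹ • x ∈ C' := fun x hx => subset_closure (hmap' x (hC'U x hx))
  have h3 : ∀ x : X, x ∉ C → h⁻¹ • x ∈ C' := fun x hx =>
    subset_closure (hmap' x (fun hc => hx (subset_closure hc)))
  have h3' : ∀ x : X, x ∉ C' → h • x ∈ C := fun x hx =>
    subset_closure (hmap x (fun hc => hx (subset_closure hc)))
  have h1' : ∀ x ∈ C, (h⁻¹)⁻¹ • x ∈ C := by simpa [inv_inv] using h1
  have h3'' : ∀ x : X, x ∉ C' → (h⁻¹)⁻¹ • x ∈ C := by simpa [inv_inv] using h3'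
  set K := ⋂ n : ℕ, h ^ n • C with hKdef
  set L := ⋂ n : ℕ, (h⁻¹) ^ n • C' with hLdef
  have hKne : K.Nonempty := lox_K_nonempty hcont h hCcomp (hUne.mono subset_closure) h1
  have hLne : L.Nonempty := lox_K_nonempty hcont h⁻¹ hC'comp (hVne.mono subset_closure) h2
  obtain ⟨hKcomp, hKcl⟩ := lox_K_compact hcont h hCcomp
  obtain ⟨hLcomp, hLcl⟩ := lox_K_compact hcont h⁻¹ hC'comp
  have hKU : K ⊆ U := by
    intro x hx
    have hx1 := Set.mem_iInter.1 hx 1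
    rw [pow_one] at hx1
    obtain ⟨c, hc, rfl⟩ := hx1
    exact hmap c (hCV c hc)
  have hLV : L ⊆ V := by
    intro x hx
    have hx1 := Set.mem_iInter.1 hx 1
    rw [pow_one] at hx1
    obtain ⟨c, hc, rfl⟩ := hx1
    exact hmap' c (hC'U c hc)
  have hKL : Disjoint K L := hUV.mono hKU hLV
  have hKf := lox_K_fwd h h1
  have hKb := lox_K_bwd h (C := C)
  have hLf := lox_K_fwd h⁻¹ h2
  have hLb := lox_K_bwd h⁻¹ (C := C')
  have hLb' : ∀ x ∈ L, h • x ∈ L := by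
    intro x hx
    have := hLb x hx
    rwa [inv_inv] at this
  have hKzpow := lox_zpow_mem h hKf hKb
  have hLzpow := lox_zpow_mem h⁻¹ hLf hLb
  have hKnegpow : ∀ (n : ℕ), ∀ x ∈ K, (h⁻¹) ^ n • x ∈ K := by
    intro n x hx
    have := hKzpow (-(n : ℤ)) x hx
    rwa [zpow_neg, zpow_natCast, ← inv_pow] at this
  have hLpow : ∀ (n : ℕ), ∀ x ∈ L, h ^ n • x ∈ L := by
    intro n x hx
    have := hLzpow (-(n : ℤ)) x hx
    rwa [zpow_neg, zpow_natCast, ← inv_pow, inv_inv] at this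
  -- infinite order facts
  have horbU : ∀ n : ℕ, h ^ (n + 1) • z ∈ U := by
    intro n
    induction n with
    | zero => simpa using hmap z hzV
    | succ n ih =>
        rw [lox_pow_smul_succ']
        exact hmap _ (fun hc => (hUV.ne_of_mem ih hc) rfl)
  have hzfreeNat : ∀ k : ℕ, h ^ (k + 1) • z ≠ z := fun k e => hzU (e ▸ horbU k)
  have hne1 : ∀ n : ℤ, n ≠ 0 → h ^ n ≠ 1 := by
    intro n hn hcon
    have hpow1 : h ^ (n.natAbs : ℕ) = 1 := by
      rcases Int.natAbs_eq n with he | he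
      · rw [← zpow_natCast, ← he, hcon]
      · rw [← zpow_natCast]
        have hcast : (n.natAbs : ℤ) = -n := by omega
        rw [hcast, zpow_neg, hcon, inv_one]
    obtain ⟨k, hk⟩ := Nat.exists_eq_succ_of_ne_zero (Int.natAbs_ne_zero.2 hn)
    have hmem : h ^ (n.natAbs : ℕ) • z ∈ U := by rw [hk]; exact horbU k
    rw [hpow1, one_smul] at hmem
    exact hzU hmem
  have hinj : Function.Injective fun n : ℤ => h ^ n := by
    intro i j e
    by_contra hne
    refine hne1 (i - j) (by omega) ?_
    simp only at e
    rw [zpow_sub, e, mul_inv_cancel]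
  have hinv' : Function.Injective fun n : ℤ => h⁻¹ ^ n := by
    intro i j e
    simp only [inv_zpow] at e
    exact hinj (inv_injective e)
  have hzfree : ∀ n : ℤ, n ≠ 0 → h ^ n • z ≠ z := by
    have key : ∀ n : ℤ, 0 < n → h ^ n • z ≠ z := by
      intro n hn e
      lift n to ℕ using hn.le
      obtain ⟨k, hk⟩ : ∃ k : ℕ, n = k + 1 := ⟨n - 1, by omega⟩
      rw [zpow_natCast, hk] at e
      exact hzfreeNat k e
    intro n hn e
    rcases lt_trichotomy n 0 with hlt | h0 | hgt
    · refine key (-n) (by omega) ?_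
      have e2 := congrArg (fun w => h ^ (-n) • w) e
      rw [smul_smul, ← zpow_add] at e2
      simp only [neg_add_cancel, zpow_zero, one_smul] at e2
      exact e2.symm
    · exact hn h0
    · exact key n hgt e
  -- fixed points
  obtain ⟨p, hpK, hp⟩ := lox_exists_fixed hconv h hinj hKcomp hKne hLcomp hLne hKL hKf hLb'
  obtain ⟨m, hmL, hm⟩ :=
    lox_exists_fixed hconv h hinj hLcomp hLne hKcomp hKne hKL.symm hLb' hKf
  have hpU : p ∈ U := hKU hpK
  have hmV : m ∈ V := hLV hmL
  have hpm : p ≠ m := fun e => (hUV.ne_of_mem hpU (e ▸ hmV)) rfl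
  have hzK : z ∉ K := fun hc => hzU (hKU hc)
  have hzL : z ∉ L := fun hc => hzV (hLV hc)
  have hzp : z ≠ p := fun e => hzU (e ▸ hpU)
  have hzm : z ≠ m := fun e => hzV (e ▸ hmV)
  have hmK : m ∉ K := fun hc => (hKL.ne_of_mem hc hmL) rfl
  have hpL : p ∉ L := fun hc => (hKL.ne_of_mem hpK hc) rfl
  have hp' : h⁻¹ • p = p := inv_smul_eq_iff.2 hp.symm
  have hm' : h⁻¹ • m = m := inv_smul_eq_iff.2 hm.symm
  -- attraction
  have attrF : ∀ A R : Set X, IsOpen A → K ⊆ A → IsOpen R → L ⊆ R →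
      ∃ n₀ : ℕ, ∀ n ≥ n₀, ∀ x ∉ R, h ^ n • x ∈ A :=
    fun A R hA hKA hR hLR => lox_attract hcont h hCcomp hC'comp h1 h2 h3 hA hKA hR hLR
  have attrR : ∀ A R : Set X, IsOpen A → L ⊆ A → IsOpen R → K ⊆ R →
      ∃ n₀ : ℕ, ∀ n ≥ n₀, ∀ x ∉ R, (h⁻¹) ^ n • x ∈ A := by
    intro A R hA hLA hR hKR
    refine lox_attract hcont h⁻¹ hC'comp hCcomp h2 h1' h3'' hA hLA hR ?_
    simpa [inv_inv] using hKR
  have hzcomplR : z ∉ ({z}ᶜ : Set X) := fun hc => hc rfl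
  have tz1 : Filter.Tendsto (fun n : ℕ => h ^ n • z) Filter.atTop (nhds p) := by
    refine lox_tendsto h hKcomp hpK hmK hzp hzm hpm hp hm ?_
      (fun δ hδ => lox_factA_nat hconv h hinj hzp hzm hpm hδ)
    intro A hA hKA
    obtain ⟨n₀, hn₀⟩ := attrF A ({z}ᶜ) hA hKA isOpen_compl_singleton
      (fun x hx e => hzL (Set.mem_singleton_iff.1 e ▸ hx))
    exact ⟨n₀, fun n hn => hn₀ n hn z hzcomplR⟩
  have tz2 : Filter.Tendsto (fun n : ℕ => (h⁻¹) ^ n • z) Filter.atTop (nhds m) := by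
    refine lox_tendsto h⁻¹ hLcomp hmL hpL hzm hzp (Ne.symm hpm) hm' hp' ?_
      (fun δ hδ => lox_factA_nat hconv h⁻¹ hinv' hzm hzp (Ne.symm hpm) hδ)
    intro A hA hLA
    obtain ⟨n₀, hn₀⟩ := attrR A ({z}ᶜ) hA hLA isOpen_compl_singleton
      (fun x hx e => hzK (Set.mem_singleton_iff.1 e ▸ hx))
    exact ⟨n₀, fun n hn => hn₀ n hn z hzcomplR⟩
  -- K is a singleton
  have hsingK : ∀ a ∈ K, a = p := by
    intro a haK
    by_contra hap
    have ham : a ≠ m := fun e => (hKL.ne_of_mem haK hmL) e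
    have t3 : Filter.Tendsto (fun n : ℕ => (h⁻¹) ^ n • a) Filter.atTop (nhds p) := by
      refine lox_tendsto h⁻¹ hKcomp hpK hmK hap ham hpm hp' hm' ?_
        (fun δ hδ => lox_factA_nat hconv h⁻¹ hinv' hap ham hpm hδ)
      intro A hA hKA
      exact ⟨0, fun n _ => hKA (hKnegpow n a haK)⟩
    exact lox_singleton hconv h hinj hKzpow hzK hzfree hzp hzm hpm tz1 tz2 haK hap t3
  -- L is a singleton
  have hsingL : ∀ b ∈ L, b = m := by
    intro b hbL
    by_contra hbm
    have hbp : b ≠ p := fun e => (hKL.ne_of_mem hpK hbL) e.symm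
    have t3 : Filter.Tendsto (fun n : ℕ => ((h⁻¹)⁻¹) ^ n • b) Filter.atTop (nhds m) := by
      simp only [inv_inv]
      refine lox_tendsto h hLcomp hmL hpL hbm hbp (Ne.symm hpm) hm hp ?_
        (fun δ hδ => lox_factA_nat hconv h hinj hbm hbp (Ne.symm hpm) hδ)
      intro A hA hLA
      exact ⟨0, fun n _ => hLA (hLpow n b hbL)⟩
    have t2' : Filter.Tendsto (fun n : ℕ => ((h⁻¹)⁻¹) ^ n • z) Filter.atTop (nhds p) := by
      simpa [inv_inv] using tz1
    have hzfree' : ∀ n : ℤ, n ≠ 0 → (h⁻¹) ^ n • z ≠ z := by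
      intro n hn
      rw [inv_zpow, ← zpow_neg]
      exact hzfree (-n) (by omega)
    exact lox_singleton hconv h⁻¹ hinv' hLzpow hzL hzfree' hzm hzp (Ne.symm hpm)
      tz2 t2' hbL hbm t3
  refine ⟨p, m, ⟨hpm, hp, hm, ?_⟩, hpU, hmV⟩
  intro R hR A hA
  obtain ⟨R', hR'sub, hR'open, hmR'⟩ := _root_.mem_nhds_iff.1 hR
  obtain ⟨A', hA'sub, hA'open, hpA'⟩ := _root_.mem_nhds_iff.1 hA
  have hLR' : L ⊆ R' := fun b hb => by rw [hsingL b hb]; exact hmR'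
  have hKA' : K ⊆ A' := fun a ha => by rw [hsingK a ha]; exact hpA'
  obtain ⟨n₀, hn₀⟩ := attrF A' R' hA'open hKA' hR'open hLR'
  exact ⟨n₀, fun n hn x hx => hA'sub (hn₀ n hn x (fun hc => hx (hR'sub hc)))⟩

end LoxAux

/-- Density of loxodromic axes: in a minimal non-elementary convergence action
admitting a loxodromic element, for any disjoint non-empty open sets `U`, `V`
which do not cover `X` there is a loxodromic element with attracting point in
`U` and repelling point in `V`. -/
theorem loxodromic_axes_dense (Γ X : Type*) [Group Γ]
    [TopologicalSpace X] [CompactSpace X] [TopologicalSpace.MetrizableSpace X]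
    [MulAction Γ X]
    (hconv : IsConvergenceAction Γ X)
    (hmin : IsMinimalAction Γ X)
    (hne : IsNonElementaryAction Γ X)
    (hcard : ∃ a b c : X, a ≠ b ∧ a ≠ c ∧ b ≠ c)
    (g : Γ) (pg mg : X) (hg : IsLoxodromic g pg mg)
    (U V : Set X) (hU : IsOpen U) (hV : IsOpen V)
    (hUne : U.Nonempty) (hVne : V.Nonempty) (hUV : Disjoint U V)
    (hcover : U ∪ V ≠ Set.univ) :
    ∃ (h : Γ) (p m : X), IsLoxodromic h p m ∧ p ∈ U ∧ m ∈ V := by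
  letI : MetricSpace X := TopologicalSpace.metrizableSpaceMetric X
  obtain ⟨xp, hxporb, hxpU⟩ := (hmin pg).exists_mem_open hU hUne
  obtain ⟨α, hα⟩ := MulAction.mem_orbit_iff.1 hxporb
  obtain ⟨xm, hxmorb, hxmV⟩ := (hmin mg).exists_mem_open hV hVne
  obtain ⟨β, hβ⟩ := MulAction.mem_orbit_iff.1 hxmorb
  have hAnh : (fun x : X => α • x) ⁻¹' U ∈ nhds pg := by
    refine (hU.preimage (hconv.1 α)).mem_nhds ?_
    show α • pg ∈ U
    rw [hα]
    exact hxpU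
  have hRnh : (fun x : X => β • x) ⁻¹' V ∈ nhds mg := by
    refine (hV.preimage (hconv.1 β)).mem_nhds ?_
    show β • mg ∈ V
    rw [hβ]
    exact hxmV
  obtain ⟨n₀, hn₀⟩ := hg.2.2.2 _ hRnh _ hAnh
  have hmap : ∀ x : X, x ∉ V → (α * g ^ n₀ * β⁻¹) • x ∈ U := by
    intro x hx
    have hxR : β⁻¹ • x ∉ (fun x : X => β • x) ⁻¹' V := by
      simp only [Set.mem_preimage, smul_inv_smul]
      exact hx
    have hmem := hn₀ n₀ le_rfl _ hxR
    have hmem2 : α • (g ^ n₀ • (β⁻¹ • x)) ∈ U := hmem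
    rwa [smul_smul, smul_smul] at hmem2
  obtain ⟨p, m, hlox, hpU, hmV⟩ :=
    lox_master hconv (α * g ^ n₀ * β⁻¹) hU hV hUne hVne hUV hcover hmap
  exact ⟨α * g ^ n₀ * β⁻¹, p, m, hlox, hpU, hmV⟩
end

section
/- A non-elementary minimal convergence action is generically free: if Γ acts minimally on a compact metrizable perfect space X as a non-elementary convergence group, then for every γ ∈ Γ not in the kernel of the action, the fixed point set Fix(γ) has empty interior (is nowhere dense). -/
open Pointwise

section AuxMetric

open Metric Set Filter MulAction

variable {Γ X : Type*} [Group Γ] [MetricSpace X] [CompactSpace X] [MulAction Γ X]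

/-- The key auxiliary result, proved for a compact metric space. -/
private theorem aux_generically_free
    (hconv : IsConvergenceAction Γ X)
    (hmin : IsMinimalAction Γ X)
    (hΓ : Infinite Γ)
    (hperf : Perfect (Set.univ : Set X))
    (γ : Γ) (hγ : ∃ x : X, γ • x ≠ x) :
    interior {x : X | γ • x = x} = ∅ := by
  haveI : ContinuousConstSMul Γ X := ⟨hconv.1⟩
  -- every point is an accumulation point
  have hacc : ∀ x : X, (nhdsWithin x {x}ᶜ).NeBot := by
    intro x
    have h : (nhdsWithin x {x}ᶜ ⊓ Filter.principal Set.univ).NeBot := hperf.acc x (mem_univ x)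
    rwa [Filter.principal_univ, inf_top_eq] at h
  -- X is infinite
  have hXinf : Infinite X := by
    by_contra hfin
    rw [not_infinite_iff_finite] at hfin
    obtain ⟨x0, -⟩ := hγ
    exact (hacc x0).ne (discreteTopology_iff_nhds_ne.mp inferInstance x0)
  -- fresh points
  have hfresh : ∀ s : Set X, s.Finite → ∃ x, x ∉ s := fun s hs => hs.infinite_compl.nonempty
  -- complement of two points is dense
  have hdense2 : ∀ u v : X, Dense ({u, v}ᶜ : Set X) := by
    intro u v
    have h : ({u, v}ᶜ : Set X) = {u}ᶜ ∩ {v}ᶜ := by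
      rw [Set.insert_eq, Set.compl_union]
    rw [h]
    haveI := hacc u
    haveI := hacc v
    exact (dense_compl_singleton u).inter_of_isOpen_left (dense_compl_singleton v)
      isOpen_compl_singleton
  -- pointwise stabilizers of distinct triples are finite
  have hstab : ∀ a b c : X, a ≠ b → a ≠ c → b ≠ c →
      {g : Γ | g • a = a ∧ g • b = b ∧ g • c = c}.Finite := by
    intro a b c hab hac hbc
    have h := hconv.2 {(a, b, c)} {(a, b, c)}
      (by rintro p rfl; exact ⟨hab, hac, hbc⟩)
      (by rintro p rfl; exact ⟨hab, hac, hbc⟩)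
      isCompact_singleton isCompact_singleton
    refine h.subset ?_
    rintro g ⟨hga, hgb, hgc⟩
    exact ⟨(a, b, c), ⟨(a, b, c), rfl, by simp [hga, hgb, hgc]⟩, rfl⟩
  -- the "λ-separated triples" compact sets and properness
  have hKfin : ∀ l : ℝ, 0 < l →
      {g : Γ | ((fun p : X × X × X => (g • p.1, g • p.2.1, g • p.2.2)) ''
        {p : X × X × X | l ≤ dist p.1 p.2.1 ∧ l ≤ dist p.1 p.2.2 ∧ l ≤ dist p.2.1 p.2.2} ∩
        {p : X × X × X | l ≤ dist p.1 p.2.1 ∧ l ≤ dist p.1 p.2.2 ∧ l ≤ dist p.2.1 p.2.2}).Nonempty}.Finite := by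
    intro l hl
    have hsub : {p : X × X × X | l ≤ dist p.1 p.2.1 ∧ l ≤ dist p.1 p.2.2 ∧
        l ≤ dist p.2.1 p.2.2} ⊆ distinctTriples X := by
      rintro p ⟨h1, h2, h3⟩
      exact ⟨dist_pos.mp (lt_of_lt_of_le hl h1), dist_pos.mp (lt_of_lt_of_le hl h2),
        dist_pos.mp (lt_of_lt_of_le hl h3)⟩
    have hclosed : IsClosed {p : X × X × X | l ≤ dist p.1 p.2.1 ∧ l ≤ dist p.1 p.2.2 ∧
        l ≤ dist p.2.1 p.2.2} := by
      have heq : {p : X × X × X | l ≤ dist p.1 p.2.1 ∧ l ≤ dist p.1 p.2.2 ∧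
          l ≤ dist p.2.1 p.2.2} = {p : X × X × X | l ≤ dist p.1 p.2.1} ∩
          ({p : X × X × X | l ≤ dist p.1 p.2.2} ∩ {p : X × X × X | l ≤ dist p.2.1 p.2.2}) := rfl
      rw [heq]
      refine IsClosed.inter ?_ (IsClosed.inter ?_ ?_)
      · exact isClosed_le continuous_const (by fun_prop)
      · exact isClosed_le continuous_const (by fun_prop)
      · exact isClosed_le continuous_const (by fun_prop)
    exact hconv.2 _ _ hsub hsub hclosed.isCompact hclosed.isCompact
  -- minimality gives finite covers by translates of any nonempty open set
  have hcover : ∀ V : Set X, IsOpen V → V.Nonempty →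
      ∃ t : Finset Γ, (Set.univ : Set X) ⊆ ⋃ h ∈ t, h • V := by
    intro V hV hVne
    refine isCompact_univ.elim_finite_subcover (fun g : Γ => g • V)
      (fun g => hV.smul g) ?_
    intro x _
    obtain ⟨p, hporb, hpV⟩ := (hmin x).exists_mem_open hV hVne
    obtain ⟨g, rfl⟩ := MulAction.mem_orbit_iff.1 hporb
    refine Set.mem_iUnion.2 ⟨g⁻¹, Set.mem_smul_set_iff_inv_smul_mem.2 ?_⟩
    rwa [inv_inv]
  -- now suppose the interior of the fixed set is nonempty
  by_contra hne0
  obtain ⟨c, hc⟩ : (interior {x : X | γ • x = x}).Nonempty := Set.nonempty_iff_ne_empty.2 hne0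
  set Vp : Set X := interior {x : X | γ • x = x} with hVpdef
  obtain ⟨r2, hr2pos, hball⟩ : ∃ ε > 0, ball c ε ⊆ Vp := Metric.isOpen_iff.mp isOpen_interior c hc
  set r : ℝ := r2 / 2 with hrdef
  have hrpos : 0 < r := half_pos hr2pos
  set V : Set X := ball c r with hVdef
  have hdepth : ∀ l : ℝ, l ≤ r → ∀ a ∈ V, ball a l ⊆ Vp := by
    intro l hl a ha y hy
    apply hball
    have h1 : dist y a < l := mem_ball.mp hy
    have h2 : dist a c < r := mem_ball.mp ha
    have : dist y c < r2 := by
      calc dist y c ≤ dist y a + dist a c := dist_triangle y a c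
        _ < l + r := by linarith
        _ ≤ r2 := by rw [hrdef]; linarith
    exact mem_ball.mpr this
  have hVsubVp : V ⊆ Vp := by
    intro y hy
    have := hdepth r le_rfl c (mem_ball_self hrpos)
    exact this hy
  have hcV : c ∈ V := mem_ball_self hrpos
  -- a second point in V
  obtain ⟨p2, hp2V, hp2ne⟩ : ∃ p, p ∈ V ∧ p ≠ c := by
    haveI := hacc c
    have hb : V ∩ {c}ᶜ ∈ nhdsWithin c {c}ᶜ :=
      Filter.inter_mem (mem_nhdsWithin_of_mem_nhds (ball_mem_nhds c hrpos)) self_mem_nhdsWithin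
    obtain ⟨p, hp1, hp2⟩ := Filter.nonempty_of_mem hb
    exact ⟨p, hp1, hp2⟩
  set d1 : ℝ := dist c p2 with hd1def
  have hd1pos : 0 < d1 := dist_pos.mpr (Ne.symm hp2ne)
  -- a finite cover by translates of V
  obtain ⟨t, ht⟩ := hcover V isOpen_ball ⟨c, hcV⟩
  set m := t.card with hmdef
  -- m+1 distinct points and their minimal separation
  set ζ : ℕ → X := fun n => Infinite.natEmbedding X n with hζdef
  have hζinj : Function.Injective ζ := (Infinite.natEmbedding X).injective
  set S : Finset (ℕ × ℕ) :=
    (Finset.range (m + 1) ×ˢ Finset.range (m + 1)).filter (fun p => p.1 ≠ p.2) with hSdef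
  have hmpos : 0 < m := by
    have := ht (mem_univ c)
    rw [Set.mem_iUnion₂] at this
    obtain ⟨h, hht, -⟩ := this
    exact Finset.card_pos.2 ⟨h, hht⟩
  have hSne : S.Nonempty := by
    refine ⟨(0, 1), ?_⟩
    simp only [hSdef, Finset.mem_filter, Finset.mem_product, Finset.mem_range]
    exact ⟨⟨by omega, by omega⟩, by omega⟩
  set s0 : ℝ := S.inf' hSne (fun p => dist (ζ p.1) (ζ p.2)) with hs0def
  have hs0pos : 0 < s0 := by
    rw [hs0def, Finset.lt_inf'_iff]
    intro p hp
    simp only [hSdef, Finset.mem_filter] at hp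
    exact dist_pos.2 fun h => hp.2 (hζinj h)
  -- the sequence of scales
  set lam : ℕ → ℝ := fun k => min (min r (d1 / 2)) (min (s0 / 7) (1 / (k + 1))) with hlamdef
  have hlampos : ∀ k, 0 < lam k := by
    intro k
    refine lt_min (lt_min hrpos (by linarith)) (lt_min (by linarith) (by positivity))
  have hlam_r : ∀ k, lam k ≤ r := fun k => (min_le_left _ _).trans (min_le_left _ _)
  have hlam_d1 : ∀ k, 2 * lam k ≤ d1 := by
    intro k
    have : lam k ≤ d1 / 2 := (min_le_left _ _).trans (min_le_right _ _)
    linarith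
  have hlam_s0 : ∀ k, 7 * lam k ≤ s0 := by
    intro k
    have : lam k ≤ s0 / 7 := (min_le_right _ _).trans (min_le_left _ _)
    linarith
  have hlam_le : ∀ k : ℕ, lam k ≤ 1 / (k + 1) := fun k =>
    (min_le_right _ _).trans (min_le_right _ _)
  have hlam0 : Filter.Tendsto lam atTop (nhds 0) := by
    refine squeeze_zero (fun k => (hlampos k).le) hlam_le ?_
    exact_mod_cast tendsto_one_div_add_atTop_nhds_zero_nat (𝕜 := ℝ)
  -- the main per-scale construction
  have hmain : ∀ k : ℕ, ∃ (q : Γ) (u v : X),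
      ∀ w : X, w ∉ Vp → dist (q • w) u < lam k ∨ dist (q • w) v < lam k := by
    intro k
    set l := lam k with hldef
    have hlpos : 0 < l := hlampos k
    have hE := hKfin l hlpos
    set Eset : Set Γ := {g : Γ | ((fun p : X × X × X => (g • p.1, g • p.2.1, g • p.2.2)) ''
        {p : X × X × X | l ≤ dist p.1 p.2.1 ∧ l ≤ dist p.1 p.2.2 ∧ l ≤ dist p.2.1 p.2.2} ∩
        {p : X × X × X | l ≤ dist p.1 p.2.1 ∧ l ≤ dist p.1 p.2.2 ∧
          l ≤ dist p.2.1 p.2.2}).Nonempty} with hEdef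
    have hbadfin : (⋃ h ∈ t, (fun e : Γ => e * h⁻¹) '' Eset).Finite :=
      Set.Finite.biUnion t.finite_toSet (fun h _ => hE.image _)
    obtain ⟨g, hg⟩ := hbadfin.infinite_compl.nonempty
    have hgh : ∀ h ∈ t, g * h ∉ Eset := by
      intro h hht hmem
      apply hg
      refine Set.mem_biUnion hht ⟨g * h, hmem, ?_⟩
      simp
    -- pigeonhole over the cover
    have hsel : ∀ j : Fin (m + 1), ∃ h : {h // h ∈ t}, ζ j ∈ (g * h.1) • V := by
      intro j
      have h1 := ht (Set.mem_univ (g⁻¹ • ζ j))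
      rw [Set.mem_iUnion₂] at h1
      obtain ⟨h, hht, hmem⟩ := h1
      refine ⟨⟨h, hht⟩, ?_⟩
      rw [mul_smul]
      exact Set.mem_smul_set_iff_inv_smul_mem.2 hmem
    choose f hf using hsel
    obtain ⟨j, j', hjj', hff⟩ := Fintype.exists_ne_map_eq_of_card_lt f
      (by rw [Fintype.card_coe, Fintype.card_fin, ← hmdef]; omega)
    set q : Γ := g * (f j).1 with hqdef
    have hqE : q ∉ Eset := hgh _ (f j).2
    have hζjq : ζ j ∈ q • V := hf j
    have hζj'q : ζ j' ∈ q • V := by rw [hqdef, hff]; exact hf j'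
    set x : X := q⁻¹ • ζ (j : ℕ) with hxdef
    set y : X := q⁻¹ • ζ (j' : ℕ) with hydef
    have hxV : x ∈ V := Set.mem_smul_set_iff_inv_smul_mem.1 hζjq
    have hyV : y ∈ V := Set.mem_smul_set_iff_inv_smul_mem.1 hζj'q
    have hqx : q • x = ζ j := smul_inv_smul q _
    have hqy : q • y = ζ j' := smul_inv_smul q _
    have hsep : s0 ≤ dist (ζ (j : ℕ)) (ζ (j' : ℕ)) := by
      rw [hs0def]
      refine Finset.inf'_le (fun p => dist (ζ p.1) (ζ p.2)) (b := ((j : ℕ), (j' : ℕ))) ?_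
      simp only [hSdef, Finset.mem_filter, Finset.mem_product, Finset.mem_range]
      exact ⟨⟨j.isLt, j'.isLt⟩, fun h => hjj' (Fin.ext h)⟩
    have hxy7 : 7 * l ≤ dist (q • x) (q • y) := by
      rw [hqx, hqy]
      exact (hlam_s0 k).trans hsep
    -- find the good pair
    have hpair : ∃ a b : X, a ∈ V ∧ b ∈ V ∧ l ≤ dist a b ∧ l ≤ dist (q • a) (q • b) := by
      by_cases hcase : l ≤ dist (q • c) (q • p2)
      · refine ⟨c, p2, hcV, hp2V, ?_, hcase⟩
        have := hlam_d1 k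
        rw [← hd1def] at *
        have hl2 : l ≤ d1 := by linarith [hlampos k]
        simpa [hd1def] using hl2
      · push_neg at hcase
        have hgen : ∀ w : X, w ∈ V → 3 * l ≤ dist (q • w) (q • c) →
            ∃ a b : X, a ∈ V ∧ b ∈ V ∧ l ≤ dist a b ∧ l ≤ dist (q • a) (q • b) := by
          intro w hwV hw3
          have hwp2 : 2 * l ≤ dist (q • w) (q • p2) := by
            have htr : dist (q • w) (q • c) ≤ dist (q • w) (q • p2) + dist (q • p2) (q • c) :=
              dist_triangle _ _ _
            have : dist (q • p2) (q • c) < l := by rwa [dist_comm]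
            linarith
          by_cases hd : l ≤ dist w c
          · exact ⟨w, c, hwV, hcV, hd, by linarith [hlampos k]⟩
          · push_neg at hd
            have hwp : l ≤ dist w p2 := by
              have htr : dist c p2 ≤ dist c w + dist w p2 := dist_triangle _ _ _
              have h2 : 2 * l ≤ dist c p2 := hlam_d1 k
              rw [dist_comm] at hd
              linarith
            exact ⟨w, p2, hwV, hp2V, hwp, by linarith⟩
        have hw3 : 3 * l ≤ dist (q • x) (q • c) ∨ 3 * l ≤ dist (q • y) (q • c) := by
          by_contra hcon
          push_neg at hcon
          have htr : dist (q • x) (q • y) ≤ dist (q • x) (q • c) + dist (q • c) (q • y) :=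
            dist_triangle _ _ _
          rw [dist_comm (q • c) (q • y)] at htr
          have := hlampos k
          linarith [hxy7, hcon.1, hcon.2]
        rcases hw3 with hw | hw
        · exact hgen x hxV hw
        · exact hgen y hyV hw
    obtain ⟨a, b, haV, hbV, hab, hqab⟩ := hpair
    refine ⟨q, q • a, q • b, ?_⟩
    intro w hw
    have hwa : l ≤ dist w a := by
      by_contra hlt
      push_neg at hlt
      exact hw (hdepth l (hlam_r k) a haV (mem_ball.mpr hlt))
    have hwb : l ≤ dist w b := by
      by_contra hlt
      push_neg at hlt
      exact hw (hdepth l (hlam_r k) b hbV (mem_ball.mpr hlt))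
    by_contra hcon
    push_neg at hcon
    apply hqE
    refine ⟨(q • a, q • b, q • w), ⟨(a, b, w), ?_, rfl⟩, ?_⟩
    · exact ⟨hab, by rwa [dist_comm], by rwa [dist_comm]⟩
    · exact ⟨hqab, by rw [dist_comm]; exact hcon.1, by rw [dist_comm]; exact hcon.2⟩
  choose q u v hquv using hmain
  -- extract convergent subsequences of the ball centers
  obtain ⟨ustar, -, φ1, hφ1, hu1⟩ := isCompact_univ.tendsto_subseq (x := u) (fun k => mem_univ _)
  obtain ⟨vstar, -, φ2, hφ2, hv2⟩ :=
    isCompact_univ.tendsto_subseq (x := v ∘ φ1) (fun k => mem_univ _)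
  set ψ : ℕ → ℕ := φ1 ∘ φ2 with hψdef
  have hψmono : StrictMono ψ := hφ1.comp hφ2
  have hu : Filter.Tendsto (fun k => u (ψ k)) atTop (nhds ustar) :=
    hu1.comp hφ2.tendsto_atTop
  have hv : Filter.Tendsto (fun k => v (ψ k)) atTop (nhds vstar) := hv2
  have hlamψ : Filter.Tendsto (fun k => lam (ψ k)) atTop (nhds 0) :=
    hlam0.comp hψmono.tendsto_atTop
  -- the conjugates
  set β : ℕ → Γ := fun k => q (ψ k) * γ * (q (ψ k))⁻¹ with hβdef
  have hβfix : ∀ k (w : X), lam (ψ k) ≤ dist w (u (ψ k)) → lam (ψ k) ≤ dist w (v (ψ k)) →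
      β k • w = w := by
    intro k w h1 h2
    by_cases hz : (q (ψ k))⁻¹ • w ∈ Vp
    · have hmem : (q (ψ k))⁻¹ • w ∈ {x : X | γ • x = x} := interior_subset hz
      have hfix : γ • ((q (ψ k))⁻¹ • w) = (q (ψ k))⁻¹ • w := hmem
      show (q (ψ k) * γ * (q (ψ k))⁻¹) • w = w
      rw [mul_smul, mul_smul, hfix, smul_inv_smul]
    · rcases hquv (ψ k) _ hz with h | h
      · rw [smul_inv_smul] at h
        exact absurd h (not_lt.2 h1)
      · rw [smul_inv_smul] at h
        exact absurd h (not_lt.2 h2)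
  -- points staying away from ustar, vstar are eventually fixed by the conjugates
  have hev : ∀ w : X, w ≠ ustar → w ≠ vstar → ∀ᶠ k in atTop, β k • w = w := by
    intro w hwu hwv
    have h1 : 0 < dist w ustar := dist_pos.2 hwu
    have h2 : 0 < dist w vstar := dist_pos.2 hwv
    have e1 : ∀ᶠ k in atTop, dist (u (ψ k)) ustar < dist w ustar / 2 :=
      (Metric.tendsto_nhds.mp hu) _ (by linarith)
    have e2 : ∀ᶠ k in atTop, dist (v (ψ k)) vstar < dist w vstar / 2 :=
      (Metric.tendsto_nhds.mp hv) _ (by linarith)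
    have e3 : ∀ᶠ k in atTop, lam (ψ k) < dist w ustar / 2 :=
      hlamψ.eventually_lt_const (by linarith)
    have e4 : ∀ᶠ k in atTop, lam (ψ k) < dist w vstar / 2 :=
      hlamψ.eventually_lt_const (by linarith)
    filter_upwards [e1, e2, e3, e4] with k hk1 hk2 hk3 hk4
    refine hβfix k w ?_ ?_
    · have htr : dist w ustar ≤ dist w (u (ψ k)) + dist (u (ψ k)) ustar := dist_triangle _ _ _
      linarith
    · have htr : dist w vstar ≤ dist w (v (ψ k)) + dist (v (ψ k)) vstar := dist_triangle _ _ _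
      linarith
  -- a triple avoiding ustar, vstar
  obtain ⟨τ1, hτ1⟩ := hfresh {ustar, vstar} (Set.toFinite _)
  obtain ⟨τ2, hτ2⟩ := hfresh {ustar, vstar, τ1} (Set.toFinite _)
  obtain ⟨τ3, hτ3⟩ := hfresh {ustar, vstar, τ1, τ2} (Set.toFinite _)
  simp only [Set.mem_insert_iff, Set.mem_singleton_iff, not_or] at hτ1 hτ2 hτ3
  have hSfin := hstab τ1 τ2 τ3 (fun h => hτ2.2.2 h.symm) (fun h => hτ3.2.2.1 h.symm)
    (fun h => hτ3.2.2.2 h.symm)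
  set SS : Set Γ := {g : Γ | g • τ1 = τ1 ∧ g • τ2 = τ2 ∧ g • τ3 = τ3} with hSSdef
  have hevS : ∀ᶠ k in atTop, β k ∈ SS := by
    filter_upwards [hev τ1 hτ1.1 hτ1.2, hev τ2 hτ2.1 hτ2.2.1,
      hev τ3 hτ3.1 hτ3.2.1] with k hk1 hk2 hk3
    exact ⟨hk1, hk2, hk3⟩
  obtain ⟨N0, hN0⟩ := Filter.eventually_atTop.1 hevS
  haveI : Finite ↥SS := hSfin.to_subtype
  set fS : ℕ → ↥SS := fun k => ⟨β (N0 + k), hN0 _ (Nat.le_add_right _ _)⟩ with hfSdef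
  obtain ⟨bb, hbb⟩ := Finite.exists_infinite_fiber fS
  have hI : {k : ℕ | fS k = bb}.Infinite := by
    rw [← Set.infinite_coe_iff]
    exact hbb
  -- bb acts trivially off {ustar, vstar}
  have hEq : Set.EqOn (fun w : X => (bb : Γ) • w) id ({ustar, vstar}ᶜ : Set X) := by
    intro w hw
    simp only [Set.mem_compl_iff, Set.mem_insert_iff, Set.mem_singleton_iff, not_or] at hw
    obtain ⟨M, hM⟩ := Filter.eventually_atTop.1 (hev w hw.1 hw.2)
    obtain ⟨k, hkI, hkM⟩ := hI.exists_gt M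
    have hfix : β (N0 + k) • w = w := hM _ (by omega)
    have hbbeq : (bb : Γ) = β (N0 + k) := by
      rw [← hkI]
    simpa [hbbeq] using hfix
  have hbbid : (fun w : X => (bb : Γ) • w) = id :=
    Continuous.ext_on (hdense2 ustar vstar) (hconv.1 _) continuous_id hEq
  -- hence γ acts trivially, contradiction
  obtain ⟨k0, hk0⟩ := hI.nonempty
  obtain ⟨x0, hx0⟩ := hγ
  apply hx0
  have htriv : ∀ w : X, β (N0 + k0) • w = w := by
    intro w
    have h1 : (bb : Γ) • w = w := congrFun hbbid w
    have h2 : (bb : Γ) = β (N0 + k0) := by rw [← hk0]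
    rwa [h2] at h1
  have := htriv (q (ψ (N0 + k0)) • x0)
  rw [hβdef] at this
  simp only [mul_smul, inv_smul_smul] at this
  exact MulAction.injective _ this

end AuxMetric

/-- A non-elementary minimal convergence action on a perfect compact
metrizable space is generically free: every element not in the kernel of the
action has fixed point set with empty interior. -/
theorem convergence_generically_free (Γ X : Type*) [Group Γ]
    [TopologicalSpace X] [CompactSpace X] [TopologicalSpace.MetrizableSpace X]
    [MulAction Γ X]
    (hconv : IsConvergenceAction Γ X)
    (hmin : IsMinimalAction Γ X)
    (hne : IsNonElementaryAction Γ X)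
    (hcard : ∃ a b c : X, a ≠ b ∧ a ≠ c ∧ b ≠ c)
    (hperf : Perfect (Set.univ : Set X))
    (γ : Γ) (hγ : ∃ x : X, γ • x ≠ x) :
    interior {x : X | γ • x = x} = ∅ := by
  letI : MetricSpace X := TopologicalSpace.metrizableSpaceMetric X
  exact aux_generically_free hconv hmin hne.1 hperf γ hγ
end
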